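/- arXiv:0910.4441 — 4 statements merged into one kernel-verified Lean document; each statement's English description precedes it below -/
import Mathlib

section
/- Let r ≥ 1 and let M ∈ M_r(𝓕) be a matrix of full rank (det M ≠ 0). Then there exist P, Q ∈ GL_r(R) and a weakly decreasing tuple of real numbers μ_1 ≥ μ_2 ≥ … ≥ μ_r such that P M Q⁻¹ = diag(t^{μ_1}, t^{μ_2}, …, t^{μ_r}). -/
set_option linter.unusedSectionVars false


open Matrix HahnSeries

noncomputable section

variable {K : Type*} [Field K] [CharZero K]

/-- Membership in the valuation ring `R = {a ∈ 𝓕 : a = 0 ∨ ‖a‖ ≥ 0}` of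
`𝓕 = HahnSeries ℝ K`. -/
def inR (a : HahnSeries ℝ K) : Prop := a = 0 ∨ 0 ≤ a.order

/-- `M ∈ GL_r(R)`: all entries of `M` lie in `R` and `M` has a two-sided inverse with
entries in `R`. -/
def InGLR {r : ℕ} (M : Matrix (Fin r) (Fin r) (HahnSeries ℝ K)) : Prop :=
  (∀ i j, inR (M i j)) ∧
    ∃ N : Matrix (Fin r) (Fin r) (HahnSeries ℝ K),
      (∀ i j, inR (N i j)) ∧ M * N = 1 ∧ N * M = 1

/-- The diagonal matrix `D_μ = diag(t^{μ_1}, …, t^{μ_r})`. -/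
def Dmat (K : Type*) [Field K] {r : ℕ} (μ : Fin r → ℝ) :
    Matrix (Fin r) (Fin r) (HahnSeries ℝ K) :=
  Matrix.diagonal fun i => HahnSeries.single (μ i) 1

/-- `D_ν̂ = diag(t^{ν_r}, …, t^{ν_1})`. -/
def DmatHat (K : Type*) [Field K] {r : ℕ} (ν : Fin r → ℝ) :
    Matrix (Fin r) (Fin r) (HahnSeries ℝ K) :=
  Dmat K fun i => ν i.rev

/-- `inv(M) = μ`: `μ` is weakly decreasing and `P M Q⁻¹ = D_μ` for some `P, Q ∈ GL_r(R)`. -/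
def IsInv {r : ℕ} (M : Matrix (Fin r) (Fin r) (HahnSeries ℝ K)) (μ : Fin r → ℝ) : Prop :=
  Antitone μ ∧ ∃ P Q : Matrix (Fin r) (Fin r) (HahnSeries ℝ K),
    InGLR P ∧ InGLR Q ∧ P * M * Q⁻¹ = Dmat K μ

/-- `Q` is `μ`-admissible: `Q ∈ GL_r(R)` and `D_μ Q D_μ⁻¹ ∈ GL_r(R)`. -/
def MuAdmissible {r : ℕ} (μ : Fin r → ℝ)
    (Q : Matrix (Fin r) (Fin r) (HahnSeries ℝ K)) : Prop :=
  InGLR Q ∧ InGLR (Dmat K μ * Q * (Dmat K μ)⁻¹)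

/-- `T` is `ν̂`-admissible: `T ∈ GL_r(R)` and `D_ν̂⁻¹ T D_ν̂ ∈ GL_r(R)`. -/
def NuHatAdmissible {r : ℕ} (ν : Fin r → ℝ)
    (T : Matrix (Fin r) (Fin r) (HahnSeries ℝ K)) : Prop :=
  InGLR T ∧ InGLR ((DmatHat K ν)⁻¹ * T * DmatHat K ν)

/-- The minor `W_{IJ}`: the determinant of the `k × k` submatrix of `W` on rows `I` and
columns `J`. -/
def minorDet {r k : ℕ} (W : Matrix (Fin r) (Fin r) (HahnSeries ℝ K))
    (I J : Fin k → Fin r) : HahnSeries ℝ K :=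
  (W.submatrix I J).det

/-- Pair equivalence: `(A, B) = (P M Q⁻¹, Q N T⁻¹)` for some `P, Q, T ∈ GL_r(R)`. -/
def PairEquiv {r : ℕ} (M N A B : Matrix (Fin r) (Fin r) (HahnSeries ℝ K)) : Prop :=
  ∃ P Q T : Matrix (Fin r) (Fin r) (HahnSeries ℝ K),
    InGLR P ∧ InGLR Q ∧ InGLR T ∧ A = P * M * Q⁻¹ ∧ B = Q * N * T⁻¹

/-- `N` is `μ`-generic: full rank, upper triangular, and for all index sets
`I ⊆ H ⊆ J` of equal length the minors `N_{IJ}, N_{HJ}, N_{IH}` are nonzero with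
`‖N_{IJ}‖ ≤ ‖N_{HJ}‖ ≤ ‖N_{IJ}‖ + |μ_I| − |μ_H|` and `‖N_{IJ}‖ ≤ ‖N_{IH}‖`. -/
def MuGeneric {r : ℕ} (μ : Fin r → ℝ)
    (N : Matrix (Fin r) (Fin r) (HahnSeries ℝ K)) : Prop :=
  N.det ≠ 0 ∧ (∀ i j : Fin r, j < i → N i j = 0) ∧
  ∀ (k : ℕ) (I H J : Fin k → Fin r), StrictMono I → StrictMono H → StrictMono J →
    (∀ s, I s ≤ H s) → (∀ s, H s ≤ J s) →
    minorDet N I J ≠ 0 ∧ minorDet N H J ≠ 0 ∧ minorDet N I H ≠ 0 ∧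
    (minorDet N I J).order ≤ (minorDet N H J).order ∧
    (minorDet N H J).order ≤ (minorDet N I J).order + (∑ s, μ (I s)) - ∑ s, μ (H s) ∧
    (minorDet N I J).order ≤ (minorDet N I H).order

/-- `L` is `μ`-`ν̂`-generic: `L ∈ GL_r(R)`, lower triangular, and for all index sets
`I ⊆ H ⊆ J` of equal length the relevant minors are nonzero with
`‖L_{IJ}‖ ≤ ‖L_{HJ}‖ ≤ ‖L_{IJ}‖ + |μ_I| − |μ_H|` and
`‖L_{IJ}‖ ≤ ‖L_{IH}‖ ≤ ‖L_{IJ}‖ + |ν̂_J| − |ν̂_H|`. -/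
def MuNuGeneric {r : ℕ} (μ ν : Fin r → ℝ)
    (L : Matrix (Fin r) (Fin r) (HahnSeries ℝ K)) : Prop :=
  InGLR L ∧ (∀ i j : Fin r, i < j → L i j = 0) ∧
  ∀ (k : ℕ) (I H J : Fin k → Fin r), StrictMono I → StrictMono H → StrictMono J →
    (∀ s, I s ≤ H s) → (∀ s, H s ≤ J s) →
    minorDet L I J ≠ 0 ∧ minorDet L H J ≠ 0 ∧ minorDet L I H ≠ 0 ∧
    (minorDet L I J).order ≤ (minorDet L H J).order ∧
    (minorDet L H J).order ≤ (minorDet L I J).order + (∑ s, μ (I s)) - (∑ s, μ (H s)) ∧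
    (minorDet L I J).order ≤ (minorDet L I H).order ∧
    (minorDet L I H).order ≤
      (minorDet L I J).order + (∑ s, ν ((J s).rev)) - ∑ s, ν ((H s).rev)

/-- The rightmost `k` columns `(r−k+1, …, r)` of an `r × r` matrix, as a map
`Fin k → Fin r`. -/
def lastCols (r k : ℕ) (h : k ≤ r) : Fin k → Fin r :=
  fun i => ⟨r - k + i.val, by have := i.isLt; omega⟩

/-- The set of (0-based) rows of an `r × r` matrix that remain after omitting the rows
with 1-based index in the interval `[p, q]`. -/
def keptRows (r p q : ℕ) : Finset (Fin r) :=
  (Finset.univ.filter fun x : Fin r => p ≤ x.val + 1 ∧ x.val + 1 ≤ q)ᶜ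

lemma keptRows_card_le (r p q : ℕ) : (keptRows r p q).card ≤ r := by
  simpa using (keptRows r p q).card_le_univ

/-- `‖((p)^∧, …, (q)^∧)‖` for the matrix `N`: the order of the minor of `N` on the rows
`{1, …, r} ∖ {p, …, q}` (1-based) and the rightmost columns; when `p > q` no row is
omitted and this is `‖det N‖`. -/
def hatOrd {r : ℕ} (N : Matrix (Fin r) (Fin r) (HahnSeries ℝ K)) (p q : ℕ) : ℝ :=
  (minorDet N (fun i => ((keptRows r p q).orderIsoOfFin rfl i).1)
    (lastCols r (keptRows r p q).card (keptRows_card_le r p q))).order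

/-- `k` is the right filling of a pair `(M, N)` with `inv(M) = μ`: there is a
`μ`-generic matrix `N*` with `(D_μ, N*)` pair-equivalent to `(M, N)` such that `k`
satisfies the determinantal formula
`k_{1j} + ⋯ + k_{ij} = ‖((j−i)^∧, …, (j−1)^∧)‖ − ‖((j−i+1)^∧, …, (j)^∧)‖`
(all indices written 1-based). -/
def RightFillingOf {r : ℕ} (μ : Fin r → ℝ)
    (M N : Matrix (Fin r) (Fin r) (HahnSeries ℝ K))
    (k : Fin r → Fin r → ℝ) : Prop :=
  ∃ Nstar : Matrix (Fin r) (Fin r) (HahnSeries ℝ K),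
    MuGeneric μ Nstar ∧ PairEquiv M N (Dmat K μ) Nstar ∧
    ∀ i j : Fin r, i ≤ j →
      ∑ s ∈ Finset.Iic i, k s j =
        hatOrd Nstar (j.val - i.val) j.val - hatOrd Nstar (j.val - i.val + 1) (j.val + 1)

/-- The left filling of `(M, N)` is the right filling of the transposed pair
`(Nᵀ, Mᵀ)`. -/
def LeftFillingOf {r : ℕ} (ν : Fin r → ℝ)
    (M N : Matrix (Fin r) (Fin r) (HahnSeries ℝ K))
    (m : Fin r → Fin r → ℝ) : Prop :=
  RightFillingOf ν Nᵀ Mᵀ m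

/-- `{k_ij : 1 ≤ i ≤ j ≤ r}` (indexed 0-based here) is an `L𝕉` filling of type
`(μ, ν; λ)`: the conditions (LR1)–(LR4). -/
def IsLRFilling {r : ℕ} (μ ν lam : Fin r → ℝ) (k : Fin r → Fin r → ℝ) : Prop :=
  (∀ j : Fin r, μ j + ∑ s ∈ Finset.Iic j, k s j = lam j) ∧
  (∀ i : Fin r, ∑ s ∈ Finset.Ici i, k i s = ν i) ∧
  (∀ i j : Fin r, i < j → 0 ≤ k i j) ∧
  (∀ (i j : ℕ) (hi : i < r) (hj : j < r), i ≤ j → 1 ≤ j →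
    μ ⟨j, hj⟩ + ∑ s ∈ Finset.Iic (⟨i, hi⟩ : Fin r), k s ⟨j, hj⟩ ≤
      μ ⟨j - 1, by omega⟩ + ∑ s ∈ Finset.Iio (⟨i, hi⟩ : Fin r), k s ⟨j - 1, by omega⟩) ∧
  (∀ (i j : ℕ) (hij : i ≤ j) (hj : j + 1 < r),
    ∑ s ∈ Finset.Icc (⟨i + 1, by omega⟩ : Fin r) ⟨j + 1, hj⟩, k ⟨i + 1, by omega⟩ s ≤
      ∑ s ∈ Finset.Icc (⟨i, by omega⟩ : Fin r) ⟨j, by omega⟩, k ⟨i, by omega⟩ s)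



/-! ### Auxiliary lemmas for Statement 0. -/

section SNFHelpers

/-- `x = 0` or `β ≤ ‖x‖`. -/
def OrdGe (β : ℝ) (x : HahnSeries ℝ K) : Prop := x = 0 ∨ β ≤ x.order

lemma inR_of_ordGe {x : HahnSeries ℝ K} (h : OrdGe 0 x) : inR x := by
  rcases h with h | h
  exacts [Or.inl h, Or.inr h]

lemma ordGe_of_inR {x : HahnSeries ℝ K} (h : inR x) : OrdGe 0 x := by
  rcases h with h | h
  exacts [Or.inl h, Or.inr h]

lemma ordGe_zero (β : ℝ) : OrdGe β (0 : HahnSeries ℝ K) := Or.inl rfl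

lemma ordGe_mono {β β' : ℝ} (hb : β' ≤ β) {x : HahnSeries ℝ K} (h : OrdGe β x) :
    OrdGe β' x := by
  rcases h with h | h
  exacts [Or.inl h, Or.inr (le_trans hb h)]

lemma ordGe_add {β : ℝ} {x y : HahnSeries ℝ K} (hx : OrdGe β x) (hy : OrdGe β y) :
    OrdGe β (x + y) := by
  rcases hx with rfl | hx
  · simpa using hy
  rcases hy with rfl | hy
  · rw [add_zero]; exact Or.inr hx
  by_cases hxy : x + y = 0
  · exact Or.inl hxy
  · exact Or.inr (le_trans (le_min hx hy) (HahnSeries.min_order_le_order_add hxy))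

lemma ordGe_neg {β : ℝ} {x : HahnSeries ℝ K} (hx : OrdGe β x) : OrdGe β (-x) := by
  rcases hx with rfl | hx
  · simpa using ordGe_zero β
  · exact Or.inr (by rwa [HahnSeries.order_neg])

lemma ordGe_sub {β : ℝ} {x y : HahnSeries ℝ K} (hx : OrdGe β x) (hy : OrdGe β y) :
    OrdGe β (x - y) := by
  rw [sub_eq_add_neg]; exact ordGe_add hx (ordGe_neg hy)

lemma ordGe_mul {β γ : ℝ} {x y : HahnSeries ℝ K} (hx : OrdGe β x) (hy : OrdGe γ y) :
    OrdGe (β + γ) (x * y) := by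
  rcases hx with rfl | hx
  · exact Or.inl (by simp)
  rcases hy with rfl | hy
  · exact Or.inl (by simp)
  by_cases h0 : x = 0
  · exact Or.inl (by simp [h0])
  by_cases h1 : y = 0
  · exact Or.inl (by simp [h1])
  exact Or.inr (by rw [HahnSeries.order_mul h0 h1]; exact add_le_add hx hy)

lemma ordGe_sum {ι : Type*} {β : ℝ} (s : Finset ι) (f : ι → HahnSeries ℝ K)
    (h : ∀ i ∈ s, OrdGe β (f i)) : OrdGe β (∑ i ∈ s, f i) := by
  classical
  induction s using Finset.induction_on with
  | empty => simpa using ordGe_zero β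
  | insert _ _ hnot ih =>
    rw [Finset.sum_insert hnot]
    exact ordGe_add (h _ (Finset.mem_insert_self _ _))
      (ih fun i hi => h i (Finset.mem_insert_of_mem hi))

lemma inR_zero : inR (0 : HahnSeries ℝ K) := Or.inl rfl

lemma inR_one : inR (1 : HahnSeries ℝ K) := Or.inr (le_of_eq HahnSeries.order_one.symm)

lemma inR_add {x y : HahnSeries ℝ K} (hx : inR x) (hy : inR y) : inR (x + y) :=
  inR_of_ordGe (ordGe_add (ordGe_of_inR hx) (ordGe_of_inR hy))

lemma inR_neg {x : HahnSeries ℝ K} (hx : inR x) : inR (-x) :=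
  inR_of_ordGe (ordGe_neg (ordGe_of_inR hx))

lemma inR_mul {x y : HahnSeries ℝ K} (hx : inR x) (hy : inR y) : inR (x * y) :=
  inR_of_ordGe (by simpa using ordGe_mul (ordGe_of_inR hx) (ordGe_of_inR hy))

lemma inR_sum {ι : Type*} (s : Finset ι) (f : ι → HahnSeries ℝ K)
    (h : ∀ i ∈ s, inR (f i)) : inR (∑ i ∈ s, f i) :=
  inR_of_ordGe (ordGe_sum s f fun i hi => ordGe_of_inR (h i hi))

lemma hahn_order_inv {x : HahnSeries ℝ K} (hx : x ≠ 0) : (x⁻¹).order = -x.order := by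
  have h1 : x * x⁻¹ = 1 := mul_inv_cancel₀ hx
  have h2 := HahnSeries.order_mul hx (inv_ne_zero hx)
  rw [h1, HahnSeries.order_one] at h2
  linarith

/-- `GL` predicate over an arbitrary finite index type. -/
def GLR {ι : Type*} [Fintype ι] [DecidableEq ι] (M : Matrix ι ι (HahnSeries ℝ K)) : Prop :=
  (∀ i j, inR (M i j)) ∧
    ∃ N : Matrix ι ι (HahnSeries ℝ K), (∀ i j, inR (N i j)) ∧ M * N = 1 ∧ N * M = 1

lemma InGLR_of_GLR {r : ℕ} {M : Matrix (Fin r) (Fin r) (HahnSeries ℝ K)}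
    (h : GLR M) : InGLR M := by
  obtain ⟨h1, N, h2, h3, h4⟩ := h
  exact ⟨h1, N, h2, h3, h4⟩

variable {ι κ : Type*} [Fintype ι] [DecidableEq ι] [Fintype κ] [DecidableEq κ]

lemma GLR_one : GLR (1 : Matrix ι ι (HahnSeries ℝ K)) := by
  refine ⟨?_, 1, ?_, by simp, by simp⟩ <;>
  · intro i j
    rw [Matrix.one_apply]
    split <;> simp [inR_one, inR_zero]

lemma GLR_mul {A B : Matrix ι ι (HahnSeries ℝ K)} (hA : GLR A) (hB : GLR B) :
    GLR (A * B) := by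
  obtain ⟨hA1, NA, hA2, hA3, hA4⟩ := hA
  obtain ⟨hB1, NB, hB2, hB3, hB4⟩ := hB
  refine ⟨?_, NB * NA, ?_, ?_, ?_⟩
  · intro i j
    rw [Matrix.mul_apply]
    exact inR_sum _ _ fun k _ => inR_mul (hA1 i k) (hB1 k j)
  · intro i j
    rw [Matrix.mul_apply]
    exact inR_sum _ _ fun k _ => inR_mul (hB2 i k) (hA2 k j)
  · calc A * B * (NB * NA) = A * (B * NB) * NA := by
          simp only [Matrix.mul_assoc]
      _ = 1 := by rw [hB3, Matrix.mul_one, hA3]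
  · calc NB * NA * (A * B) = NB * (NA * A) * B := by
          simp only [Matrix.mul_assoc]
      _ = 1 := by rw [hA4, Matrix.mul_one, hB4]

lemma GLR_perm (σ : Equiv.Perm ι) :
    GLR ((σ.toPEquiv.toMatrix : Matrix ι ι (HahnSeries ℝ K))) := by
  have hentries : ∀ (τ : Equiv.Perm ι) (i j : ι),
      inR ((τ.toPEquiv.toMatrix : Matrix ι ι (HahnSeries ℝ K)) i j) := by
    intro τ i j
    rw [PEquiv.toMatrix_apply, Equiv.toPEquiv_apply]
    split <;> simp [inR_one, inR_zero]
  have hmul : ∀ (τ₁ τ₂ : Equiv.Perm ι), τ₁.trans τ₂ = Equiv.refl ι →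
      (τ₁.toPEquiv.toMatrix : Matrix ι ι (HahnSeries ℝ K)) * τ₂.toPEquiv.toMatrix = 1 := by
    intro τ₁ τ₂ h
    rw [← PEquiv.toMatrix_trans, ← Equiv.toPEquiv_trans, h, Equiv.toPEquiv_refl,
      PEquiv.toMatrix_refl]
  exact ⟨hentries σ, σ.symm.toPEquiv.toMatrix, hentries σ.symm,
    hmul σ σ.symm (Equiv.self_trans_symm σ), hmul σ.symm σ (Equiv.symm_trans_self σ)⟩

lemma reindex_mul_reindex (e : ι ≃ κ) (X Y : Matrix ι ι (HahnSeries ℝ K)) :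
    Matrix.reindex e e X * Matrix.reindex e e Y = Matrix.reindex e e (X * Y) := by
  simp only [Matrix.reindex_apply]
  exact Matrix.submatrix_mul_equiv X Y e.symm e.symm e.symm

lemma GLR_reindex (e : ι ≃ κ) {X : Matrix ι ι (HahnSeries ℝ K)} (h : GLR X) :
    GLR (Matrix.reindex e e X) := by
  obtain ⟨h1, N, h2, h3, h4⟩ := h
  refine ⟨?_, Matrix.reindex e e N, ?_, ?_, ?_⟩
  · intro i j; simpa using h1 (e.symm i) (e.symm j)
  · intro i j; simpa using h2 (e.symm i) (e.symm j)
  · rw [reindex_mul_reindex, h3]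
    simp [Matrix.reindex_apply, Matrix.submatrix_one_equiv]
  · rw [reindex_mul_reindex, h4]
    simp [Matrix.reindex_apply, Matrix.submatrix_one_equiv]

lemma GLR_fromBlocks_diag {X : Matrix ι ι (HahnSeries ℝ K)} {Y : Matrix κ κ (HahnSeries ℝ K)}
    (hX : GLR X) (hY : GLR Y) : GLR (Matrix.fromBlocks X 0 0 Y) := by
  obtain ⟨hX1, NX, hX2, hX3, hX4⟩ := hX
  obtain ⟨hY1, NY, hY2, hY3, hY4⟩ := hY
  refine ⟨?_, Matrix.fromBlocks NX 0 0 NY, ?_, ?_, ?_⟩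
  · rintro (i | i) (j | j) <;> simp [inR_zero, hX1, hY1]
  · rintro (i | i) (j | j) <;> simp [inR_zero, hX2, hY2]
  · rw [Matrix.fromBlocks_multiply]
    simp [hX3, hY3, Matrix.fromBlocks_one]
  · rw [Matrix.fromBlocks_multiply]
    simp [hX4, hY4, Matrix.fromBlocks_one]

lemma GLR_fromBlocks_upper {W : Matrix ι κ (HahnSeries ℝ K)} (hW : ∀ i j, inR (W i j)) :
    GLR (Matrix.fromBlocks 1 W 0 (1 : Matrix κ κ (HahnSeries ℝ K))) := by
  have h1 : ∀ i j, inR ((1 : Matrix ι ι (HahnSeries ℝ K)) i j) := (GLR_one).1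
  have h2 : ∀ i j, inR ((1 : Matrix κ κ (HahnSeries ℝ K)) i j) := (GLR_one).1
  refine ⟨?_, Matrix.fromBlocks 1 (-W) 0 1, ?_, ?_, ?_⟩
  · rintro (i | i) (j | j) <;> simp [inR_zero, hW, h1, h2]
  · rintro (i | i) (j | j) <;> simp [inR_zero, inR_neg, hW, h1, h2]
  · rw [Matrix.fromBlocks_multiply]
    simp [Matrix.fromBlocks_one]
  · rw [Matrix.fromBlocks_multiply]
    simp [Matrix.fromBlocks_one]

lemma GLR_fromBlocks_lower {W : Matrix κ ι (HahnSeries ℝ K)} (hW : ∀ i j, inR (W i j)) :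
    GLR (Matrix.fromBlocks 1 0 W (1 : Matrix κ κ (HahnSeries ℝ K))) := by
  have h1 : ∀ i j, inR ((1 : Matrix ι ι (HahnSeries ℝ K)) i j) := (GLR_one).1
  have h2 : ∀ i j, inR ((1 : Matrix κ κ (HahnSeries ℝ K)) i j) := (GLR_one).1
  refine ⟨?_, Matrix.fromBlocks 1 0 (-W) 1, ?_, ?_, ?_⟩
  · rintro (i | i) (j | j) <;> simp [inR_zero, hW, h1, h2]
  · rintro (i | i) (j | j) <;> simp [inR_zero, inR_neg, hW, h1, h2]
  · rw [Matrix.fromBlocks_multiply]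
    simp [Matrix.fromBlocks_one]
  · rw [Matrix.fromBlocks_multiply]
    simp [Matrix.fromBlocks_one]

lemma GLR_diagonal (d : ι → HahnSeries ℝ K) (h0 : ∀ i, d i ≠ 0)
    (h : ∀ i, inR (d i)) (h' : ∀ i, inR (d i)⁻¹) : GLR (Matrix.diagonal d) := by
  refine ⟨?_, Matrix.diagonal fun i => (d i)⁻¹, ?_, ?_, ?_⟩
  · intro i j
    rw [Matrix.diagonal_apply]
    split <;> simp_all [inR_zero]
  · intro i j
    rw [Matrix.diagonal_apply]
    split <;> simp_all [inR_zero]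
  · rw [Matrix.diagonal_mul_diagonal]
    have : (fun i => d i * (d i)⁻¹) = fun _ => (1 : HahnSeries ℝ K) :=
      funext fun i => mul_inv_cancel₀ (h0 i)
    rw [this, Matrix.diagonal_one]
  · rw [Matrix.diagonal_mul_diagonal]
    have : (fun i => (d i)⁻¹ * d i) = fun _ => (1 : HahnSeries ℝ K) :=
      funext fun i => inv_mul_cancel₀ (h0 i)
    rw [this, Matrix.diagonal_one]

lemma Dmat_snoc {n : ℕ} (μ' : Fin n → ℝ) (α : ℝ) :
    Dmat K (Fin.snoc μ' α) =
      Matrix.reindex finSumFinEquiv finSumFinEquiv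
        (Matrix.fromBlocks (Dmat K μ') 0 0
          (Matrix.diagonal fun _ : Fin 1 => HahnSeries.single α 1)) := by
  have hfun : (fun i : Fin (n + 1) => HahnSeries.single ((Fin.snoc μ' α : Fin (n + 1) → ℝ) i) (1 : K)) =
      (Sum.elim (fun i : Fin n => HahnSeries.single (μ' i) (1 : K))
        (fun _ : Fin 1 => HahnSeries.single α (1 : K))) ∘
        ((finSumFinEquiv.symm : Fin (n + 1) ≃ Fin n ⊕ Fin 1) :
          Fin (n + 1) → Fin n ⊕ Fin 1) := by
    funext i
    refine Fin.lastCases ?_ (fun j => ?_) i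
    · rw [Function.comp_apply, finSumFinEquiv_symm_last, Sum.elim_inr, Fin.snoc_last]
    · rw [Function.comp_apply, Fin.snoc_castSucc,
        show finSumFinEquiv.symm (Fin.castSucc j) = Sum.inl j from
          finSumFinEquiv_symm_apply_castAdd j, Sum.elim_inl]
  rw [Dmat, Dmat, Matrix.fromBlocks_diagonal, Matrix.reindex_apply,
    Matrix.submatrix_diagonal_equiv, hfun]

lemma antitone_snoc {n : ℕ} {μ' : Fin n → ℝ} {α : ℝ} (h : Antitone μ')
    (h2 : ∀ i, α ≤ μ' i) : Antitone (Fin.snoc μ' α) := by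
  intro a b hab
  rcases Fin.eq_castSucc_or_eq_last b with ⟨bb, rfl⟩ | rfl
  · rcases Fin.eq_castSucc_or_eq_last a with ⟨aa, rfl⟩ | rfl
    · rw [Fin.snoc_castSucc, Fin.snoc_castSucc]
      exact h (Fin.castSucc_le_castSucc_iff.mp hab)
    · exact absurd hab (not_le.mpr (Fin.castSucc_lt_last bb))
  · rcases Fin.eq_castSucc_or_eq_last a with ⟨aa, rfl⟩ | rfl
    · rw [Fin.snoc_castSucc, Fin.snoc_last]
      exact h2 aa
    · simp

lemma snf_aux (n : ℕ) :
    ∀ M : Matrix (Fin n) (Fin n) (HahnSeries ℝ K), M.det ≠ 0 →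
    ∃ (P Q : Matrix (Fin n) (Fin n) (HahnSeries ℝ K)) (μ : Fin n → ℝ),
      GLR P ∧ GLR Q ∧ Antitone μ ∧ P * M * Q = Dmat K μ ∧
      ∀ β : ℝ, (∀ i j, OrdGe β (M i j)) → ∀ i, β ≤ μ i := by
  induction n with
  | zero =>
    intro M _
    refine ⟨1, 1, fun i => i.elim0, GLR_one, GLR_one, fun a => a.elim0, ?_,
      fun β _ i => i.elim0⟩
    ext i j
    exact i.elim0
  | succ n IH =>
    intro M hM
    classical
    have hne : ∃ p : Fin (n + 1) × Fin (n + 1), M p.1 p.2 ≠ 0 := by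
      by_contra hc
      push_neg at hc
      apply hM
      have hz : M = 0 := Matrix.ext fun i j => hc (i, j)
      rw [hz, Matrix.det_zero]
    obtain ⟨p₀, hp₀, hmin⟩ := Finset.exists_min_image
      (Finset.univ.filter fun p : Fin (n + 1) × Fin (n + 1) => M p.1 p.2 ≠ 0)
      (fun p => (M p.1 p.2).order)
      (by obtain ⟨p, hp⟩ := hne; exact ⟨p, Finset.mem_filter.mpr ⟨Finset.mem_univ _, hp⟩⟩)
    set i₀ := p₀.1
    set j₀ := p₀.2
    have ha : M i₀ j₀ ≠ 0 := by
      have := (Finset.mem_filter.mp hp₀).2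
      simpa [i₀, j₀] using this
    set α : ℝ := (M i₀ j₀).order with hα
    have hminM : ∀ i j, M i j ≠ 0 → α ≤ (M i j).order := by
      intro i j h
      exact hmin (i, j) (Finset.mem_filter.mpr ⟨Finset.mem_univ _, h⟩)
    have hordM : ∀ i j, OrdGe α (M i j) := by
      intro i j
      by_cases h : M i j = 0
      · exact Or.inl h
      · exact Or.inr (hminM i j h)
    set σ : Equiv.Perm (Fin (n + 1)) := Equiv.swap i₀ (Fin.last n) with hσdef
    set τ : Equiv.Perm (Fin (n + 1)) := Equiv.swap j₀ (Fin.last n) with hτdef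
    set M₂ := M.submatrix σ τ with hM₂def
    have hM₂entries : ∀ i j, OrdGe α (M₂ i j) := fun i j => hordM _ _
    have hpivot : M₂ (Fin.last n) (Fin.last n) = M i₀ j₀ := by
      simp [hM₂def, hσdef, hτdef, Matrix.submatrix_apply, Equiv.swap_apply_right]
    have hdetM₂ : M₂.det ≠ 0 := by
      have h1 : M₂ = (M.submatrix σ id).submatrix id τ := by
        rw [Matrix.submatrix_submatrix]
        rfl
      have hsign : ∀ ρ : Equiv.Perm (Fin (n + 1)),
          ((Equiv.Perm.sign ρ : ℤ) : HahnSeries ℝ K) ≠ 0 := by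
        intro ρ
        rcases Int.units_eq_one_or (Equiv.Perm.sign ρ) with h | h <;> rw [h] <;> simp
      rw [h1, Matrix.det_permute' τ, Matrix.det_permute σ]
      exact mul_ne_zero (hsign τ) (mul_ne_zero (hsign σ) hM)
    set e : Fin n ⊕ Fin 1 ≃ Fin (n + 1) := finSumFinEquiv with hedef
    set M₃ := Matrix.reindex e.symm e.symm M₂ with hM₃def
    have hM₃apply : ∀ x y, M₃ x y = M₂ (e x) (e y) := by
      intro x y
      simp [hM₃def, Matrix.reindex_apply]
    have hM₃entries : ∀ x y, OrdGe α (M₃ x y) := by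
      intro x y
      rw [hM₃apply]
      exact hM₂entries _ _
    set A := M₃.toBlocks₁₁ with hAdef
    set B := M₃.toBlocks₁₂ with hBdef
    set C := M₃.toBlocks₂₁ with hCdef
    set a : HahnSeries ℝ K := M i₀ j₀ with hadef
    have haord : a.order = α := rfl
    have hlast : e (Sum.inr (0 : Fin 1)) = Fin.last n := by
      simp [hedef]
      ext
      simp [Fin.natAdd]
    have hD : M₃.toBlocks₂₂ = Matrix.diagonal (fun _ : Fin 1 => a) := by
      ext i j
      have hi : i = 0 := Subsingleton.elim _ _
      have hj : j = 0 := Subsingleton.elim _ _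
      subst hi; subst hj
      rw [Matrix.toBlocks₂₂]
      simp only [Matrix.of_apply]
      rw [hM₃apply, hlast, hpivot, Matrix.diagonal_apply_eq]
    set D := Matrix.diagonal (fun _ : Fin 1 => a) with hDdef
    have hM₃eq : M₃ = Matrix.fromBlocks A B C D := by
      rw [← hD, hAdef, hBdef, hCdef, Matrix.fromBlocks_toBlocks]
    have hDl : Matrix.diagonal (fun _ : Fin 1 => a⁻¹) * D = 1 := by
      rw [hDdef, Matrix.diagonal_mul_diagonal]
      have : (fun i : Fin 1 => a⁻¹ * a) = fun _ => (1 : HahnSeries ℝ K) :=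
        funext fun i => inv_mul_cancel₀ ha
      rw [this, Matrix.diagonal_one]
    have hDr : D * Matrix.diagonal (fun _ : Fin 1 => a⁻¹) = 1 := by
      rw [hDdef, Matrix.diagonal_mul_diagonal]
      have : (fun i : Fin 1 => a * a⁻¹) = fun _ => (1 : HahnSeries ℝ K) :=
        funext fun i => mul_inv_cancel₀ ha
      rw [this, Matrix.diagonal_one]
    letI : Invertible D := ⟨Matrix.diagonal fun _ : Fin 1 => a⁻¹, hDl, hDr⟩
    have hinvD : ⅟D = Matrix.diagonal fun _ : Fin 1 => a⁻¹ := rfl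
    set A' := A - B * ⅟D * C with hA'def
    have hdecomp : Matrix.fromBlocks A B C D =
        Matrix.fromBlocks 1 (B * ⅟D) 0 1 * Matrix.fromBlocks A' 0 0 D *
          Matrix.fromBlocks 1 0 (⅟D * C) 1 :=
      Matrix.fromBlocks_eq_of_invertible₂₂ A B C D
    have hainv : OrdGe (-α) a⁻¹ := Or.inr (le_of_eq (hahn_order_inv ha).symm)
    have hAentry : ∀ i j, OrdGe α (A i j) := by
      intro i j
      rw [hAdef, Matrix.toBlocks₁₁]
      exact hM₃entries _ _
    have hBentry : ∀ i j, OrdGe α (B i j) := by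
      intro i j
      rw [hBdef, Matrix.toBlocks₁₂]
      exact hM₃entries _ _
    have hCentry : ∀ i j, OrdGe α (C i j) := by
      intro i j
      rw [hCdef, Matrix.toBlocks₂₁]
      exact hM₃entries _ _
    have hBD : ∀ i j, inR ((B * ⅟D) i j) := by
      intro i j
      rw [hinvD, Matrix.mul_diagonal]
      refine inR_of_ordGe ?_
      have h6 := ordGe_mul (hBentry i j) hainv
      simpa using h6
    have hDC : ∀ i j, inR ((⅟D * C) i j) := by
      intro i j
      rw [hinvD, Matrix.diagonal_mul]
      refine inR_of_ordGe ?_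
      have h6 := ordGe_mul hainv (hCentry i j)
      simpa using h6
    have hA'entry : ∀ i j, OrdGe α (A' i j) := by
      intro i j
      have h1 : A' i j = A i j - B i 0 * a⁻¹ * C 0 j := by
        rw [hA'def, Matrix.sub_apply, Matrix.mul_apply]
        congr 1
        rw [Fin.sum_univ_one, hinvD, Matrix.mul_diagonal]
      rw [h1]
      refine ordGe_sub (hAentry i j) ?_
      have h6 := ordGe_mul (ordGe_mul (hBentry i 0) hainv) (hCentry 0 j)
      simpa using h6
    have hdetM₃ : M₃.det = M₂.det := by
      rw [hM₃def, Matrix.reindex_apply]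
      simp only [Equiv.symm_symm]
      exact Matrix.det_submatrix_equiv_self e M₂
    have hdetA' : A'.det ≠ 0 := by
      have h2 : M₃.det = A'.det * a := by
        rw [hM₃eq, hdecomp, Matrix.det_mul, Matrix.det_mul,
          Matrix.det_fromBlocks_zero₂₁, Matrix.det_fromBlocks_zero₂₁,
          Matrix.det_fromBlocks_zero₁₂]
        simp [hDdef, Matrix.det_diagonal]
      intro hc
      apply hdetM₂
      rw [← hdetM₃, h2, hc, zero_mul]
    obtain ⟨P', Q', μ', hP', hQ', hμ', hPQ', hbound'⟩ := IH A' hdetA'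
    set u : HahnSeries ℝ K := HahnSeries.single (-α) 1 * a with hu_def
    have hu : u ≠ 0 := mul_ne_zero (HahnSeries.single_ne_zero one_ne_zero) ha
    have huord : u.order = 0 := by
      rw [hu_def, HahnSeries.order_mul (HahnSeries.single_ne_zero one_ne_zero) ha,
        HahnSeries.order_single one_ne_zero, haord, neg_add_cancel]
    have huinvord : (u⁻¹).order = 0 := by rw [hahn_order_inv hu, huord, neg_zero]
    have hques : u⁻¹ * a = HahnSeries.single α 1 := by
      have h3 : HahnSeries.single α (1 : K) * u = a := by
        rw [hu_def, ← mul_assoc, HahnSeries.single_mul_single, add_neg_cancel, one_mul,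
          HahnSeries.single_zero_one, one_mul]
      rw [← h3, mul_comm (HahnSeries.single α (1 : K)) u, ← mul_assoc,
        inv_mul_cancel₀ hu, one_mul]
    have hinRu : inR u := Or.inr (le_of_eq huord.symm)
    have hinRuinv : inR u⁻¹ := Or.inr (le_of_eq huinvord.symm)
    set Pb := Matrix.fromBlocks P' 0 0 (Matrix.diagonal fun _ : Fin 1 => u⁻¹) with hPbdef
    set Qb := Matrix.fromBlocks Q' 0 0 (1 : Matrix (Fin 1) (Fin 1) (HahnSeries ℝ K))
      with hQbdef
    set U := Matrix.fromBlocks (1 : Matrix (Fin n) (Fin n) (HahnSeries ℝ K)) (B * ⅟D) 0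
      (1 : Matrix (Fin 1) (Fin 1) (HahnSeries ℝ K)) with hUdef
    set Uinv := Matrix.fromBlocks (1 : Matrix (Fin n) (Fin n) (HahnSeries ℝ K))
      (-(B * ⅟D)) 0 (1 : Matrix (Fin 1) (Fin 1) (HahnSeries ℝ K)) with hUinvdef
    set V := Matrix.fromBlocks (1 : Matrix (Fin n) (Fin n) (HahnSeries ℝ K)) 0 (⅟D * C)
      (1 : Matrix (Fin 1) (Fin 1) (HahnSeries ℝ K)) with hVdef
    set Vinv := Matrix.fromBlocks (1 : Matrix (Fin n) (Fin n) (HahnSeries ℝ K)) 0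
      (-(⅟D * C)) (1 : Matrix (Fin 1) (Fin 1) (HahnSeries ℝ K)) with hVinvdef
    have hUinvU : Uinv * U = 1 := by
      rw [hUinvdef, hUdef, Matrix.fromBlocks_multiply]
      simp [Matrix.fromBlocks_one]
    have hVVinv : V * Vinv = 1 := by
      rw [hVdef, hVinvdef, Matrix.fromBlocks_multiply]
      simp [Matrix.fromBlocks_one]
    have hGLRPb : GLR Pb := by
      refine GLR_fromBlocks_diag hP' (GLR_diagonal _ (fun _ => inv_ne_zero hu) ?_ ?_)
      · intro i; exact hinRuinv
      · intro i; rw [inv_inv]; exact hinRu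
    have hGLRQb : GLR Qb := GLR_fromBlocks_diag hQ' GLR_one
    have hGLRUinv : GLR Uinv := GLR_fromBlocks_upper fun i j => inR_neg (hBD i j)
    have hGLRVinv : GLR Vinv := GLR_fromBlocks_lower fun i j => inR_neg (hDC i j)
    set Pfin := Matrix.reindex e e (Pb * Uinv) * σ.toPEquiv.toMatrix with hPfindef
    set Qfin := τ.toPEquiv.toMatrix * Matrix.reindex e e (Vinv * Qb) with hQfindef
    have hGLRP : GLR Pfin := GLR_mul (GLR_reindex e (GLR_mul hGLRPb hGLRUinv)) (GLR_perm σ)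
    have hGLRQ : GLR Qfin := GLR_mul (GLR_perm τ) (GLR_reindex e (GLR_mul hGLRVinv hGLRQb))
    have hperm : σ.toPEquiv.toMatrix * M * τ.toPEquiv.toMatrix = M₂ := by
      rw [PEquiv.toMatrix_toPEquiv_mul, PEquiv.mul_toMatrix_toPEquiv,
        Matrix.submatrix_submatrix, hM₂def, hτdef]
      simp [Equiv.symm_swap]
    have hM₂M₃ : M₂ = Matrix.reindex e e M₃ := by
      rw [hM₃def, ← Matrix.reindex_symm, Equiv.apply_symm_apply]
    have hPbMidQb : Pb * (Matrix.fromBlocks A' 0 0 D * Qb) =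
        Matrix.fromBlocks (Dmat K μ') 0 0
          (Matrix.diagonal fun _ : Fin 1 => HahnSeries.single α 1) := by
      have h1 : Matrix.fromBlocks A' 0 0 D * Qb = Matrix.fromBlocks (A' * Q') 0 0 D := by
        rw [hQbdef, Matrix.fromBlocks_multiply]
        simp
      have h2 : Pb * Matrix.fromBlocks (A' * Q') 0 0 D =
          Matrix.fromBlocks (P' * (A' * Q')) 0 0
            ((Matrix.diagonal fun _ : Fin 1 => u⁻¹) * D) := by
        rw [hPbdef, Matrix.fromBlocks_multiply]
        simp
      rw [h1, h2, ← Matrix.mul_assoc, hPQ', hDdef, Matrix.diagonal_mul_diagonal,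
        show (fun _ : Fin 1 => u⁻¹ * a) = fun _ : Fin 1 => HahnSeries.single α (1 : K) from
          funext fun _ => hques]
    have hkey : Pfin * M * Qfin = Dmat K (Fin.snoc μ' α) := by
      have hassoc : Pfin * M * Qfin =
          Matrix.reindex e e (Pb * Uinv) * (σ.toPEquiv.toMatrix * M * τ.toPEquiv.toMatrix) *
            Matrix.reindex e e (Vinv * Qb) := by
        rw [hPfindef, hQfindef]
        simp only [Matrix.mul_assoc]
      rw [hassoc, hperm, hM₂M₃, hM₃eq, hdecomp,
        reindex_mul_reindex, reindex_mul_reindex, Dmat_snoc, ← hedef]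
      refine congrArg (fun Z => Matrix.reindex e e Z) ?_
      calc Pb * Uinv * (U * Matrix.fromBlocks A' 0 0 D * V) * (Vinv * Qb)
          = Pb * ((Uinv * U) * (Matrix.fromBlocks A' 0 0 D * ((V * Vinv) * Qb))) := by
            simp only [Matrix.mul_assoc]
        _ = Pb * (Matrix.fromBlocks A' 0 0 D * Qb) := by
            rw [hUinvU, hVVinv, Matrix.one_mul, Matrix.one_mul]
        _ = _ := hPbMidQb
    refine ⟨Pfin, Qfin, Fin.snoc μ' α, hGLRP, hGLRQ, ?_, hkey, ?_⟩
    · refine antitone_snoc hμ' ?_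
      intro i
      exact hbound' α hA'entry i
    · intro β hβ i
      have hβα : β ≤ α := by
        rcases hβ i₀ j₀ with h | h
        · exact absurd h ha
        · exact h
      refine Fin.lastCases ?_ (fun j => ?_) i
      · rw [Fin.snoc_last]
        exact hβα
      · rw [Fin.snoc_castSucc]
        exact le_trans hβα (hbound' α hA'entry j)

end SNFHelpers

/-- Existence of invariant factors: any full-rank `M ∈ M_r(𝓕)` can be
brought to the form `diag(t^{μ_1}, …, t^{μ_r})` with `μ_1 ≥ … ≥ μ_r` by `P, Q ∈ GL_r(R)`. -/
theorem invariant_partition_exists {r : ℕ} (hr : 1 ≤ r)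
    (M : Matrix (Fin r) (Fin r) (HahnSeries ℝ K)) (hM : M.det ≠ 0) :
    ∃ (P Q : Matrix (Fin r) (Fin r) (HahnSeries ℝ K)) (μ : Fin r → ℝ),
      InGLR P ∧ InGLR Q ∧ Antitone μ ∧ P * M * Q⁻¹ = Dmat K μ := by
  obtain ⟨P, Q, μ, hP, hQ, hμ, hPQ, -⟩ := snf_aux r M hM
  obtain ⟨hQ1, N, hN1, hQN, hNQ⟩ := hQ
  refine ⟨P, N, μ, InGLR_of_GLR hP, ⟨hN1, Q, hQ1, hNQ, hQN⟩, hμ, ?_⟩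
  rw [Matrix.inv_eq_right_inv hNQ, hPQ]

end
end

section
/- Let M ∈ M_r(𝓕) be of full rank. If P M Q⁻¹ = diag(t^{μ_1}, …, t^{μ_r}) and P' M Q'⁻¹ = diag(t^{μ'_1}, …, t^{μ'_r}) for P, Q, P', Q' ∈ GL_r(R), where μ_1 ≥ … ≥ μ_r and μ'_1 ≥ … ≥ μ'_r are weakly decreasing real tuples, then μ_i = μ'_i for all 1 ≤ i ≤ r. That is, the invariant partition of M is uniquely determined by M and is an invariant of its GL_r(R)-equivalence orbit. -/
set_option linter.unusedSectionVars false


open Matrix HahnSeries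

noncomputable section

variable {K : Type*} [Field K] [CharZero K]

namespace Aux

/-- `x` is zero or has order at least `v`. -/
def ZOrd (v : ℝ) (x : HahnSeries ℝ K) : Prop := x = 0 ∨ v ≤ x.order

lemma ZOrd.mono {v w : ℝ} {x : HahnSeries ℝ K} (h : ZOrd v x) (hw : w ≤ v) : ZOrd w x := by
  rcases h with h | h
  · exact Or.inl h
  · exact Or.inr (hw.trans h)

lemma ZOrd.add {v : ℝ} {x y : HahnSeries ℝ K} (hx : ZOrd v x) (hy : ZOrd v y) :
    ZOrd v (x + y) := by
  rcases hx with hx | hx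
  · simpa [hx] using hy
  rcases hy with hy | hy
  · rw [hy, add_zero]; exact Or.inr hx
  by_cases hxy : x + y = 0
  · exact Or.inl hxy
  · exact Or.inr (le_trans (le_min hx hy) (HahnSeries.min_order_le_order_add hxy))

lemma ZOrd.mul {v w : ℝ} {x y : HahnSeries ℝ K} (hx : ZOrd v x) (hy : ZOrd w y) :
    ZOrd (v + w) (x * y) := by
  rcases hx with hx | hx
  · exact Or.inl (by simp [hx])
  rcases hy with hy | hy
  · exact Or.inl (by simp [hy])
  by_cases hx0 : x = 0
  · exact Or.inl (by simp [hx0])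
  by_cases hy0 : y = 0
  · exact Or.inl (by simp [hy0])
  exact Or.inr (by rw [HahnSeries.order_mul hx0 hy0]; exact add_le_add hx hy)

lemma ZOrd.sum {ι : Type*} {v : ℝ} (s : Finset ι) (f : ι → HahnSeries ℝ K)
    (h : ∀ i ∈ s, ZOrd v (f i)) : ZOrd v (∑ i ∈ s, f i) := by
  induction s using Finset.cons_induction with
  | empty => exact Or.inl (by simp)
  | cons a s ha ih =>
      rw [Finset.sum_cons]
      exact (h a (Finset.mem_cons_self a s)).add
        (ih fun i hi => h i (Finset.mem_cons_of_mem hi))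

lemma ZOrd.prod {ι : Type*} (s : Finset ι) (f : ι → HahnSeries ℝ K) (v : ι → ℝ)
    (h : ∀ i ∈ s, ZOrd (v i) (f i)) : ZOrd (∑ i ∈ s, v i) (∏ i ∈ s, f i) := by
  induction s using Finset.cons_induction with
  | empty => exact Or.inr (by simp)
  | cons a s ha ih =>
      rw [Finset.sum_cons, Finset.prod_cons]
      exact (h a (Finset.mem_cons_self a s)).mul
        (ih fun i hi => h i (Finset.mem_cons_of_mem hi))

lemma ZOrd.units_smul {v : ℝ} {x : HahnSeries ℝ K} (u : ℤˣ) (h : ZOrd v x) :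
    ZOrd v (u • x) := by
  rcases Int.units_eq_one_or u with hu | hu
  · subst hu
    have hx : ((1 : ℤˣ) • x) = x := by rw [Units.smul_def]; simp
    rw [hx]; exact h
  · subst hu
    have hx : ((-1 : ℤˣ) • x) = -x := by rw [Units.smul_def]; simp
    rw [hx]
    rcases h with h | h
    · exact Or.inl (by simp [h])
    · exact Or.inr (by rw [HahnSeries.order_neg]; exact h)

lemma inR_iff {a : HahnSeries ℝ K} : inR a ↔ ZOrd 0 a := Iff.rfl

lemma prod_single_one {ι : Type*} (s : Finset ι) (g : ι → ℝ) :
    (∏ i ∈ s, (HahnSeries.single (g i) (1 : K))) = HahnSeries.single (∑ i ∈ s, g i) 1 := by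
  induction s using Finset.cons_induction with
  | empty => simp [HahnSeries.single_zero_one]
  | cons a s ha ih =>
      rw [Finset.prod_cons, Finset.sum_cons, ih, HahnSeries.single_mul_single, one_mul]


/-- all `k × k` minors of `X` are zero or of order at least `v`. -/
def MinorsGE (k : ℕ) {r : ℕ} (X : Matrix (Fin r) (Fin r) (HahnSeries ℝ K)) (v : ℝ) : Prop :=
  ∀ I J : Fin k → Fin r, ZOrd v ((X.submatrix I J).det)

lemma det_mul_submatrix {r k : ℕ} (A X : Matrix (Fin r) (Fin r) (HahnSeries ℝ K))
    (I J : Fin k → Fin r) :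
    ((A * X).submatrix I J).det
      = ∑ f : Fin k → Fin r, (∏ s, A (I s) (f s)) * (X.submatrix f J).det := by
  have h1 : ((A * X).submatrix I J : Matrix (Fin k) (Fin k) (HahnSeries ℝ K))
      = fun s => ∑ l, A (I s) l • (X.submatrix id J l) := by
    funext s t
    simp [Matrix.mul_apply, Matrix.submatrix_apply, Finset.sum_apply, smul_eq_mul]
  calc ((A * X).submatrix I J).det
      = Matrix.detRowAlternating (fun s => ∑ l, A (I s) l • (X.submatrix id J l)) := by
        rw [← h1]; rfl
    _ = ∑ f : Fin k → Fin r,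
          Matrix.detRowAlternating (fun s => A (I s) (f s) • (X.submatrix id J (f s))) :=
        (Matrix.detRowAlternating (R := HahnSeries ℝ K)
          (n := Fin k)).toMultilinearMap.map_sum (fun s l => A (I s) l • (X.submatrix id J l))
    _ = ∑ f : Fin k → Fin r, (∏ s, A (I s) (f s)) * (X.submatrix f J).det := by
        refine Finset.sum_congr rfl fun f _ => ?_
        have h2 : (Matrix.detRowAlternating fun s => A (I s) (f s) • (X.submatrix id J (f s)))
            = (∏ s, A (I s) (f s)) • (Matrix.detRowAlternating (X.submatrix f J)) :=
          (Matrix.detRowAlternating (R := HahnSeries ℝ K)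
            (n := Fin k)).toMultilinearMap.map_smul_univ
            (fun s => A (I s) (f s)) (X.submatrix f J)
        rw [h2, smul_eq_mul]; rfl

lemma MinorsGE.mul_left {r k : ℕ} {v : ℝ} {A X : Matrix (Fin r) (Fin r) (HahnSeries ℝ K)}
    (hX : MinorsGE k X v) (hA : ∀ i j, inR (A i j)) : MinorsGE k (A * X) v := by
  intro I J
  rw [det_mul_submatrix]
  refine ZOrd.sum _ _ fun f _ => ?_
  have h1 : ZOrd (0 : ℝ) (∏ s, A (I s) (f s)) := by
    have := ZOrd.prod Finset.univ (fun s => A (I s) (f s)) (fun _ => 0)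
      (fun s _ => inR_iff.mp (hA _ _))
    simpa using this
  simpa using h1.mul (hX f J)

lemma MinorsGE.transpose {r k : ℕ} {v : ℝ} {X : Matrix (Fin r) (Fin r) (HahnSeries ℝ K)}
    (hX : MinorsGE k X v) : MinorsGE k Xᵀ v := by
  intro I J
  rw [show (Xᵀ.submatrix I J : Matrix (Fin k) (Fin k) (HahnSeries ℝ K)) = (X.submatrix J I)ᵀ
    from rfl, Matrix.det_transpose]
  exact hX J I

lemma MinorsGE.mul_right {r k : ℕ} {v : ℝ} {B X : Matrix (Fin r) (Fin r) (HahnSeries ℝ K)}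
    (hX : MinorsGE k X v) (hB : ∀ i j, inR (B i j)) : MinorsGE k (X * B) v := by
  have h := hX.transpose.mul_left (A := Bᵀ) (fun i j => hB j i)
  rw [← Matrix.transpose_mul] at h
  have h2 := h.transpose
  rwa [Matrix.transpose_transpose] at h2

lemma strictMono_val_bound {k r : ℕ} (f : Fin k → Fin r) (hf : StrictMono f) (s : Fin k) :
    (f s).val ≤ r - k + s.val := by
  have claim : ∀ d (a b : Fin k), a.val + d = b.val → (f a).val + d ≤ (f b).val := by
    intro d
    induction d with
    | zero =>
        intro a b hab
        have : a = b := Fin.ext (by omega)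
        subst this; omega
    | succ n ih =>
        intro a b hab
        have hb' : a.val + n < k := by omega
        have h1 := ih a ⟨a.val + n, hb'⟩ rfl
        have h2 : f ⟨a.val + n, hb'⟩ < f b := hf (by rw [Fin.lt_def]; simp; omega)
        have h3 := Fin.lt_def.mp h2
        omega
  have hsk : s.val < k := s.isLt
  have hlast : k - 1 < k := by omega
  have h := claim (k - 1 - s.val) s ⟨k - 1, hlast⟩ (by simp; omega)
  have h2 : (f ⟨k - 1, hlast⟩).val < r := (f ⟨k - 1, hlast⟩).isLt
  omega

lemma sum_mu_le {r : ℕ} {μ : Fin r → ℝ} (hμ : Antitone μ) {k : ℕ} (hk : k ≤ r)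
    (I : Fin k → Fin r) (hI : Function.Injective I) :
    ∑ s : Fin k, μ (lastCols r k hk s) ≤ ∑ s : Fin k, μ (I s) := by
  set T : Finset (Fin r) := Finset.univ.image I with hT
  have hTcard : T.card = k := by
    rw [hT, Finset.card_image_of_injective _ hI, Finset.card_univ, Fintype.card_fin]
  set f := T.orderEmbOfFin hTcard with hf
  have h1 : ∑ s : Fin k, μ (I s) = ∑ x ∈ T, μ x := by
    rw [hT, Finset.sum_image (fun x _ y _ h => hI h)]
  have himg : Finset.univ.image (fun s => (f s : Fin r)) = T := by
    apply Finset.coe_injective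
    rw [Finset.coe_image, Finset.coe_univ, Set.image_univ]
    exact T.range_orderEmbOfFin hTcard
  have h2 : ∑ x ∈ T, μ x = ∑ s : Fin k, μ (f s) := by
    rw [← himg, Finset.sum_image (fun x _ y _ h => f.injective h)]
  rw [h1, h2]
  refine Finset.sum_le_sum fun s _ => ?_
  have hb := strictMono_val_bound (fun s => (f s : Fin r)) f.strictMono s
  exact hμ (by rw [Fin.le_def]; simpa [lastCols] using hb)

lemma minorsGE_Dmat {r : ℕ} {μ : Fin r → ℝ} (hμ : Antitone μ) {k : ℕ} (hk : k ≤ r) :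
    MinorsGE k (Dmat K μ) (∑ s : Fin k, μ (lastCols r k hk s)) := by
  intro I J
  by_cases hI : Function.Injective I
  swap
  · rw [Function.not_injective_iff] at hI
    obtain ⟨a, b, hab, hne⟩ := hI
    left
    apply Matrix.det_zero_of_row_eq hne
    funext t
    simp [Dmat, Matrix.submatrix_apply, hab]
  by_cases hJ : Function.Injective J
  swap
  · rw [Function.not_injective_iff] at hJ
    obtain ⟨a, b, hab, hne⟩ := hJ
    left
    apply Matrix.det_zero_of_column_eq hne
    intro t
    simp [Dmat, Matrix.submatrix_apply, hab]
  rw [Matrix.det_apply]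
  refine ZOrd.sum _ _ fun σ _ => ?_
  refine ZOrd.units_smul _ ?_
  by_cases hall : ∀ i, I (σ i) = J i
  · have hprod : (∏ i, (Dmat K μ).submatrix I J (σ i) i)
        = HahnSeries.single (∑ i, μ (J i)) (1 : K) := by
      rw [← prod_single_one]
      refine Finset.prod_congr rfl fun i _ => ?_
      simp [Dmat, Matrix.submatrix_apply, hall i]
    rw [hprod]
    right
    rw [HahnSeries.order_single one_ne_zero]
    exact sum_mu_le hμ hk J hJ
  · push_neg at hall
    obtain ⟨i, hi⟩ := hall
    left
    apply Finset.prod_eq_zero (Finset.mem_univ i)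
    simp [Dmat, Matrix.submatrix_apply, Matrix.diagonal_apply_ne _ hi]

lemma det_lastCols_Dmat {r : ℕ} (μ : Fin r → ℝ) {k : ℕ} (hk : k ≤ r) :
    ((Dmat K μ).submatrix (lastCols r k hk) (lastCols r k hk)).det
      = HahnSeries.single (∑ s : Fin k, μ (lastCols r k hk s)) (1 : K) := by
  have hinj : Function.Injective (lastCols r k hk) := by
    intro a b hab
    apply Fin.ext
    have h := congrArg Fin.val hab
    simp [lastCols] at h
    omega
  rw [show (Dmat K μ) = Matrix.diagonal (fun i => HahnSeries.single (μ i) (1 : K)) from rfl,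
    Matrix.submatrix_diagonal _ _ hinj, Matrix.det_diagonal]
  exact prod_single_one _ _

lemma inR_matmul {r : ℕ} {A B : Matrix (Fin r) (Fin r) (HahnSeries ℝ K)}
    (hA : ∀ i j, inR (A i j)) (hB : ∀ i j, inR (B i j)) :
    ∀ i j, inR ((A * B) i j) := by
  intro i j
  rw [Matrix.mul_apply, inR_iff]
  refine ZOrd.sum _ _ fun l _ => ?_
  simpa using (inR_iff.mp (hA i l)).mul (inR_iff.mp (hB l j))

lemma sum_last_le {r : ℕ} {μ₁ μ₂ : Fin r → ℝ} (hμ₁ : Antitone μ₁)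
    {A B : Matrix (Fin r) (Fin r) (HahnSeries ℝ K)}
    (hA : ∀ i j, inR (A i j)) (hB : ∀ i j, inR (B i j))
    (hAB : A * Dmat K μ₁ * B = Dmat K μ₂) {k : ℕ} (hk : k ≤ r) :
    ∑ s : Fin k, μ₁ (lastCols r k hk s) ≤ ∑ s : Fin k, μ₂ (lastCols r k hk s) := by
  have h1 : MinorsGE k (Dmat K μ₂) (∑ s : Fin k, μ₁ (lastCols r k hk s)) := by
    rw [← hAB]
    exact ((minorsGE_Dmat hμ₁ hk).mul_left hA).mul_right hB
  have h2 := h1 (lastCols r k hk) (lastCols r k hk)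
  rw [det_lastCols_Dmat] at h2
  rcases h2 with h2 | h2
  · exact absurd h2 (HahnSeries.single_ne_zero one_ne_zero)
  · rwa [HahnSeries.order_single one_ne_zero] at h2

end Aux

/-- Uniqueness of the invariant partition. -/
theorem invariant_partition_unique {r : ℕ}
    (M : Matrix (Fin r) (Fin r) (HahnSeries ℝ K)) (hM : M.det ≠ 0)
    (P Q P' Q' : Matrix (Fin r) (Fin r) (HahnSeries ℝ K))
    (hP : InGLR P) (hQ : InGLR Q) (hP' : InGLR P') (hQ' : InGLR Q')
    (μ μ' : Fin r → ℝ) (hμ : Antitone μ) (hμ' : Antitone μ')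
    (h : P * M * Q⁻¹ = Dmat K μ) (h' : P' * M * Q'⁻¹ = Dmat K μ') :
    ∀ i : Fin r, μ i = μ' i := by
  obtain ⟨hPe, NP, hNPe, hPN, -⟩ := hP
  obtain ⟨hQe, NQ, hNQe, hQN, -⟩ := hQ
  obtain ⟨hP'e, NP', hNP'e, hP'N, -⟩ := hP'
  obtain ⟨hQ'e, NQ', hNQ'e, hQ'N, -⟩ := hQ'
  have hPdet : IsUnit P.det :=
    IsUnit.of_mul_eq_one _ (by rw [← Matrix.det_mul, hPN, Matrix.det_one])
  have hQdet : IsUnit Q.det :=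
    IsUnit.of_mul_eq_one _ (by rw [← Matrix.det_mul, hQN, Matrix.det_one])
  have hP'det : IsUnit P'.det :=
    IsUnit.of_mul_eq_one _ (by rw [← Matrix.det_mul, hP'N, Matrix.det_one])
  have hQ'det : IsUnit Q'.det :=
    IsUnit.of_mul_eq_one _ (by rw [← Matrix.det_mul, hQ'N, Matrix.det_one])
  have hPinv : P⁻¹ = NP := Matrix.inv_eq_right_inv hPN
  have hQinv : Q⁻¹ = NQ := Matrix.inv_eq_right_inv hQN
  have hP'inv : P'⁻¹ = NP' := Matrix.inv_eq_right_inv hP'N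
  have hQ'inv : Q'⁻¹ = NQ' := Matrix.inv_eq_right_inv hQ'N
  have e1 : (P' * P⁻¹) * Dmat K μ * (Q * Q'⁻¹) = Dmat K μ' := by
    have cP : P⁻¹ * P = 1 := Matrix.nonsing_inv_mul _ hPdet
    have cQ : Q⁻¹ * Q = 1 := Matrix.nonsing_inv_mul _ hQdet
    rw [← h, ← h']
    have ha : P' * P⁻¹ * (P * M * Q⁻¹) * (Q * Q'⁻¹)
        = P' * (P⁻¹ * (P * (M * (Q⁻¹ * (Q * Q'⁻¹))))) := by
      simp only [Matrix.mul_assoc]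
    rw [ha, show Q⁻¹ * (Q * Q'⁻¹) = Q'⁻¹ by rw [← Matrix.mul_assoc, cQ, Matrix.one_mul],
      show P⁻¹ * (P * (M * Q'⁻¹)) = M * Q'⁻¹ by rw [← Matrix.mul_assoc, cP, Matrix.one_mul],
      ← Matrix.mul_assoc]
  have e2 : (P * P'⁻¹) * Dmat K μ' * (Q' * Q⁻¹) = Dmat K μ := by
    have cP' : P'⁻¹ * P' = 1 := Matrix.nonsing_inv_mul _ hP'det
    have cQ' : Q'⁻¹ * Q' = 1 := Matrix.nonsing_inv_mul _ hQ'det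
    rw [← h, ← h']
    have ha : P * P'⁻¹ * (P' * M * Q'⁻¹) * (Q' * Q⁻¹)
        = P * (P'⁻¹ * (P' * (M * (Q'⁻¹ * (Q' * Q⁻¹))))) := by
      simp only [Matrix.mul_assoc]
    rw [ha, show Q'⁻¹ * (Q' * Q⁻¹) = Q⁻¹ by rw [← Matrix.mul_assoc, cQ', Matrix.one_mul],
      show P'⁻¹ * (P' * (M * Q⁻¹)) = M * Q⁻¹ by rw [← Matrix.mul_assoc, cP', Matrix.one_mul],
      ← Matrix.mul_assoc]
  have hA1 : ∀ i j, inR ((P' * P⁻¹) i j) := by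
    intro i j; rw [hPinv]; exact Aux.inR_matmul hP'e hNPe i j
  have hB1 : ∀ i j, inR ((Q * Q'⁻¹) i j) := by
    intro i j; rw [hQ'inv]; exact Aux.inR_matmul hQe hNQ'e i j
  have hA2 : ∀ i j, inR ((P * P'⁻¹) i j) := by
    intro i j; rw [hP'inv]; exact Aux.inR_matmul hPe hNP'e i j
  have hB2 : ∀ i j, inR ((Q' * Q⁻¹) i j) := by
    intro i j; rw [hQinv]; exact Aux.inR_matmul hQ'e hNQe i j
  have heq : ∀ (k : ℕ) (hk : k ≤ r),
      ∑ s : Fin k, μ (lastCols r k hk s) = ∑ s : Fin k, μ' (lastCols r k hk s) :=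
    fun k hk => le_antisymm (Aux.sum_last_le hμ hA1 hB1 e1 hk)
      (Aux.sum_last_le hμ' hA2 hB2 e2 hk)
  intro i
  have hi := i.isLt
  set k := r - 1 - i.val with hkdef
  have hk1 : k + 1 ≤ r := by omega
  have hk : k ≤ r := by omega
  have hrec : ∀ ν : Fin r → ℝ,
      ∑ s : Fin (k + 1), ν (lastCols r (k + 1) hk1 s)
        = ν i + ∑ s : Fin k, ν (lastCols r k hk s) := by
    intro ν
    rw [Fin.sum_univ_succ]
    congr 1
    · congr 1
      apply Fin.ext
      simp only [lastCols, Fin.val_zero]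
      omega
    · refine Finset.sum_congr rfl fun s _ => ?_
      congr 1
      apply Fin.ext
      simp only [lastCols, Fin.val_succ]
      omega
  have h1 := heq (k + 1) hk1
  rw [hrec μ, hrec μ'] at h1
  have h2 := heq k hk
  linarith


end
end

section
/- Let μ = (μ_1 ≥ … ≥ μ_r) be an ℝ-partition and let S ∈ M_r(𝓕) be of full rank. Then there exists a μ-admissible matrix Q ∈ GL_r(R) such that for all index sets I ⊆ H ⊆ J of equal length k with 1 ≤ k ≤ r, the minors (QS)_{IJ} and (QS)_{HJ} are nonzero and ‖(QS)_{IJ}‖ ≤ ‖(QS)_{HJ}‖ ≤ ‖(QS)_{IJ}‖ + |μ_I| − |μ_H|. -/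
open Matrix HahnSeries

noncomputable section

variable {K : Type*} [Field K] [CharZero K]

abbrev inRR {K : Type*} [Field K] (a : HahnSeries ℝ K) : Prop := inR a

abbrev DmatX (K : Type*) [Field K] {r : ℕ} (μ : Fin r → ℝ) := Dmat K μ

/-- The finset of strictly monotone maps `Fin k → Fin r`. -/
def SMfin (k r : ℕ) : Finset (Fin k → Fin r) :=
  Finset.univ.filter (fun f => StrictMono f)

lemma mem_SMfin {k r : ℕ} {f : Fin k → Fin r} : f ∈ SMfin k r ↔ StrictMono f := by
  unfold SMfin
  rw [Finset.mem_filter]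
  simp

variable {R : Type*} [CommRing R]

lemma det_submatrix_comp_perm {k r : ℕ} (B : Matrix (Fin r) (Fin k) R)
    (g : Fin k → Fin r) (σ : Equiv.Perm (Fin k)) :
    (B.submatrix (g ∘ σ) id).det = (Equiv.Perm.sign σ : ℤ) * (B.submatrix g id).det := by
  have : B.submatrix (g ∘ σ) id = (B.submatrix g id).submatrix σ id := by
    ext i j; simp [Matrix.submatrix]
  rw [this, Matrix.det_permute]

lemma det_submatrix_id_eq_sum {k r : ℕ} (A : Matrix (Fin k) (Fin r) R) (g : Fin k → Fin r) :
    (A.submatrix id g).det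
      = ∑ σ : Equiv.Perm (Fin k), ((Equiv.Perm.sign σ : ℤ) : R) * ∏ s, A s (g (σ s)) := by
  rw [Matrix.det_apply']
  refine Fintype.sum_equiv (Equiv.inv (Equiv.Perm (Fin k))) _ _ (fun σ => ?_)
  simp only [Equiv.inv_apply, Equiv.Perm.sign_inv]
  congr 1
  exact Fintype.prod_equiv σ (fun i => A.submatrix id g (σ i) i)
    (fun x => A x (g (σ⁻¹ x))) (fun i => by simp)

theorem cauchyBinet {k r : ℕ} (A : Matrix (Fin k) (Fin r) R) (B : Matrix (Fin r) (Fin k) R) :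
    (A * B).det = ∑ g ∈ SMfin k r, (A.submatrix id g).det * (B.submatrix g id).det := by
  classical
  -- Step 1: expand rows
  have step1 : (A * B).det
      = ∑ p : Fin k → Fin r, (∏ s, A s (p s)) * (B.submatrix p id).det := by
    calc (A * B).det
        = Matrix.detRowAlternating (fun s => ∑ j, A s j • B j) := by
          congr 1
          ext s t
          simp [Matrix.mul_apply]
      _ = ∑ p : Fin k → Fin r, Matrix.detRowAlternating (fun s => A s (p s) • B (p s)) :=
          Matrix.detRowAlternating.toMultilinearMap.map_sum (fun s j => A s j • B j)
      _ = ∑ p : Fin k → Fin r, (∏ s, A s (p s)) * (B.submatrix p id).det := by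
          refine Finset.sum_congr rfl (fun p _ => ?_)
          have h := Matrix.detRowAlternating.toMultilinearMap.map_smul_univ
            (fun s => A s (p s)) (fun s => B (p s))
          calc Matrix.detRowAlternating (fun s => A s (p s) • B (p s))
              = (∏ s, A s (p s)) • Matrix.detRowAlternating (fun s => B (p s)) := h
            _ = (∏ s, A s (p s)) * (B.submatrix p id).det := by rw [smul_eq_mul]; rfl
  rw [step1]
  -- Step 2: non-injective terms vanish
  rw [← Finset.sum_filter_add_sum_filter_not Finset.univ (fun p => Function.Injective p)]
  have step2 : ∑ p ∈ Finset.univ.filter (fun p => ¬ Function.Injective (p : Fin k → Fin r)),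
      (∏ s, A s (p s)) * (B.submatrix p id).det = 0 := by
    refine Finset.sum_eq_zero (fun p hp => ?_)
    rw [Finset.mem_filter] at hp
    rw [Function.not_injective_iff] at hp
    obtain ⟨s, t, hst, hne⟩ := hp.2
    have : (B.submatrix p id).det = 0 :=
      Matrix.det_zero_of_row_eq hne (by ext j; simp [Matrix.submatrix, hst])
    rw [this, mul_zero]
  rw [step2, add_zero]
  -- Step 3: group injective maps as (strictly monotone) ∘ (permutation)
  have step3 : ∀ g ∈ SMfin k r, (A.submatrix id g).det * (B.submatrix g id).det
      = ∑ σ : Equiv.Perm (Fin k), (∏ s, A s ((g ∘ σ) s)) * (B.submatrix (g ∘ σ) id).det := by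
    intro g _
    rw [det_submatrix_id_eq_sum, Finset.sum_mul]
    refine Finset.sum_congr rfl (fun σ _ => ?_)
    rw [det_submatrix_comp_perm]
    simp only [Function.comp_apply]
    push_cast
    ring
  rw [Finset.sum_congr rfl step3, ← Finset.sum_product']
  refine (Finset.sum_bij (fun (q : (Fin k → Fin r) × Equiv.Perm (Fin k)) _ => q.1 ∘ q.2)
    ?_ ?_ ?_ ?_).symm
  · rintro ⟨g, σ⟩ hq
    rw [Finset.mem_product] at hq
    have hg : StrictMono g := mem_SMfin.1 hq.1
    simp only [Finset.mem_filter, Finset.mem_univ, true_and]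
    exact hg.injective.comp σ.injective
  · rintro ⟨g, σ⟩ hq ⟨g', σ'⟩ hq' heq
    rw [Finset.mem_product] at hq hq'
    have heq' : g ∘ ⇑σ = g' ∘ ⇑σ' := heq
    have hg : StrictMono g := mem_SMfin.1 hq.1
    have hg' : StrictMono g' := mem_SMfin.1 hq'.1
    haveI : WellFoundedLT (Fin k) := Finite.to_wellFoundedLT
    have hrange : Set.range g = Set.range g' := by
      have h1 : Set.range (g ∘ ⇑σ) = Set.range g := by
        rw [Set.range_comp, Equiv.range_eq_univ, Set.image_univ]
      have h2 : Set.range (g' ∘ ⇑σ') = Set.range g' := by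
        rw [Set.range_comp, Equiv.range_eq_univ, Set.image_univ]
      rw [← h1, ← h2, heq']
    have hgg : g = g' := hg.range_inj hg' |>.1 hrange
    subst hgg
    have hσ : σ = σ' := by
      ext t
      have h2 := congrFun heq' t
      simp only [Function.comp_apply] at h2
      exact congrArg Fin.val (hg.injective h2)
    rw [hσ]
  · intro p hp
    rw [Finset.mem_filter] at hp
    have hinj : Function.Injective p := hp.2
    have himg : (Finset.univ.image p).card = k := by
      rw [Finset.card_image_of_injective _ hinj, Finset.card_univ, Fintype.card_fin]
    set s : Finset (Fin r) := Finset.univ.image p with hs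
    have hmem : ∀ t, p t ∈ s := fun t => Finset.mem_image_of_mem _ (Finset.mem_univ _)
    let τ : Fin k → Fin k := fun t => (s.orderIsoOfFin himg).symm ⟨p t, hmem t⟩
    have hτinj : Function.Injective τ := by
      intro a b hab
      have : (⟨p a, hmem a⟩ : {x // x ∈ s}) = ⟨p b, hmem b⟩ :=
        (s.orderIsoOfFin himg).symm.injective hab
      exact hinj (congrArg Subtype.val this)
    have hτbij : Function.Bijective τ := Finite.injective_iff_bijective.1 hτinj
    refine ⟨⟨s.orderEmbOfFin himg, Equiv.ofBijective τ hτbij⟩, ?_, ?_⟩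
    · rw [Finset.mem_product]
      exact ⟨mem_SMfin.2 (s.orderEmbOfFin himg).strictMono, Finset.mem_univ _⟩
    · funext t
      show s.orderEmbOfFin himg (τ t) = p t
      rw [← Finset.coe_orderIsoOfFin_apply]
      show ((s.orderIsoOfFin himg) ((s.orderIsoOfFin himg).symm ⟨p t, hmem t⟩) : Fin r) = p t
      rw [OrderIso.apply_symm_apply]
  · rintro ⟨g, σ⟩ _
    rfl

lemma fin_le_apply_of_strictMono {k r : ℕ} {I : Fin k → Fin r} (hI : StrictMono I)
    (s : Fin k) : (s : ℕ) ≤ (I s : ℕ) := by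
  obtain ⟨n, hn⟩ := s
  induction n with
  | zero => exact Nat.zero_le _
  | succ m ih =>
    have hm : m < k := Nat.lt_of_succ_lt hn
    have h1 := ih hm
    have h2 : I ⟨m, hm⟩ < I ⟨m + 1, hn⟩ := hI (by simp [Fin.lt_def])
    rw [Fin.lt_def] at h2
    simp only [Fin.val_mk] at h1 h2 ⊢
    omega

lemma exists_perm_cross {k : ℕ} (s₀ : Fin k) (σ : Equiv.Perm (Fin k)) :
    ∃ t, s₀ ≤ t ∧ σ t ≤ s₀ := by
  by_contra hcon
  push_neg at hcon
  have hmaps : ∀ t ∈ Finset.Ici s₀, σ t ∈ Finset.Ioi s₀ := by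
    intro t ht
    rw [Finset.mem_Ici] at ht
    rw [Finset.mem_Ioi]
    exact hcon t ht
  have hcard := Finset.card_le_card_of_injOn σ hmaps (σ.injective.injOn)
  rw [Fin.card_Ici, Fin.card_Ioi] at hcard
  have : (s₀ : ℕ) < k := s₀.isLt
  omega

/-- `det` of a submatrix of a "lower triangular" matrix on rows `I`, columns `B`
vanishes if `I s < B s` for some `s`. -/
lemma det_submatrix_lower_eq_zero {k r : ℕ} {M : Matrix (Fin r) (Fin r) R}
    (hM : ∀ i j : Fin r, i < j → M i j = 0) {I B : Fin k → Fin r}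
    (hI : Monotone I) (hB : Monotone B) (h : ∃ s, I s < B s) :
    (M.submatrix I B).det = 0 := by
  obtain ⟨s₀, hs₀⟩ := h
  rw [Matrix.det_apply']
  refine Finset.sum_eq_zero (fun σ _ => ?_)
  obtain ⟨t, ht1, ht2⟩ := exists_perm_cross s₀ σ
  have hz : M.submatrix I B (σ t) t = 0 := by
    refine hM _ _ (lt_of_le_of_lt (hI ht2) (lt_of_lt_of_le hs₀ (hB ht1)))
  exact mul_eq_zero_of_right _ (Finset.prod_eq_zero (Finset.mem_univ t) hz)

/-- Upper-triangular version. -/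
lemma det_submatrix_upper_eq_zero {k r : ℕ} {M : Matrix (Fin r) (Fin r) R}
    (hM : ∀ i j : Fin r, j < i → M i j = 0) {B A : Fin k → Fin r}
    (hB : Monotone B) (hA : Monotone A) (h : ∃ s, A s < B s) :
    (M.submatrix B A).det = 0 := by
  rw [← Matrix.det_transpose, Matrix.transpose_submatrix]
  exact det_submatrix_lower_eq_zero (fun i j hij => hM j i hij) hA hB h

lemma strictMono_eq_of_range_subset {k r : ℕ} {B B₀ : Fin k → Fin r}
    (hB : StrictMono B) (hB₀ : StrictMono B₀) (h : ∀ t, B t ∈ Set.range B₀) : B = B₀ := by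
  haveI : WellFoundedLT (Fin k) := Finite.to_wellFoundedLT
  refine (hB.range_inj hB₀).1 ?_
  have hsub : Finset.univ.image B ⊆ Finset.univ.image B₀ := by
    intro x hx
    rw [Finset.mem_image] at hx ⊢
    obtain ⟨t, _, rfl⟩ := hx
    obtain ⟨u, hu⟩ := h t
    exact ⟨u, Finset.mem_univ _, hu⟩
  have hcard : (Finset.univ.image B₀).card ≤ (Finset.univ.image B).card := by
    rw [Finset.card_image_of_injective _ hB.injective,
      Finset.card_image_of_injective _ hB₀.injective]
  have := Finset.eq_of_subset_of_card_le hsub hcard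
  have hco : (Finset.univ.image B : Set (Fin r)) = (Finset.univ.image B₀ : Set (Fin r)) := by
    rw [this]
  simpa [Finset.coe_image, Set.image_univ] using hco

open HahnSeries

section Hahn
variable {K : Type*} [Field K]

lemma inRR_zero : inRR (0 : HahnSeries ℝ K) := Or.inl rfl

lemma inRR_single {e : ℝ} (he : 0 ≤ e) (c : K) : inRR (single e c) := by
  by_cases hc : c = 0
  · left; simp [hc]
  · right; rw [order_single hc]; exact he

lemma inRR_add {a b : HahnSeries ℝ K} (ha : inRR a) (hb : inRR b) : inRR (a + b) := by
  rcases ha with rfl | ha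
  · simpa using hb
  rcases hb with rfl | hb
  · rw [add_zero]; exact Or.inr ha
  by_cases hab : a + b = 0
  · exact Or.inl hab
  · right
    have := HahnSeries.min_order_le_order_add hab
    have hmin : (0 : ℝ) ≤ min a.order b.order := le_min ha hb
    exact le_trans hmin this

lemma inRR_sum {ι : Type*} {s : Finset ι} {f : ι → HahnSeries ℝ K}
    (h : ∀ i ∈ s, inRR (f i)) : inRR (∑ i ∈ s, f i) := by
  classical
  induction s using Finset.cons_induction with
  | empty => simpa using inRR_zero
  | cons i s his ih =>
    rw [Finset.sum_cons]
    exact inRR_add (h i (Finset.mem_cons_self i s)) (ih fun j hj => h j (Finset.mem_cons.2 (Or.inr hj)))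

lemma coeff_sum {ι : Type*} (s : Finset ι) (f : ι → HahnSeries ℝ K) (x : ℝ) :
    (∑ i ∈ s, f i).coeff x = ∑ i ∈ s, (f i).coeff x := by
  classical
  induction s using Finset.cons_induction with
  | empty => simp
  | cons i s his ih => rw [Finset.sum_cons, Finset.sum_cons, HahnSeries.coeff_add, ih]

lemma coeff_single_mul {e x : ℝ} {c : K} {y : HahnSeries ℝ K} :
    ((single e c) * y).coeff x = c * y.coeff (x - e) := by
  have hx : x = (x - e) + e := by ring
  rw [hx, HahnSeries.coeff_single_mul_add]
  ring_nf

lemma hahn_ne_zero_of_coeff {x : HahnSeries ℝ K} {e : ℝ} (h : x.coeff e ≠ 0) : x ≠ 0 := by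
  intro hx; rw [hx] at h; simp at h

lemma order_sum_eq {ι : Type*} {s : Finset ι} {f : ι → HahnSeries ℝ K} {m : ℝ}
    (hge : ∀ i ∈ s, ∀ x : ℝ, x < m → (f i).coeff x = 0)
    (hne : (∑ i ∈ s, f i).coeff m ≠ 0) :
    (∑ i ∈ s, f i) ≠ 0 ∧ (∑ i ∈ s, f i).order = m := by
  have hnz : (∑ i ∈ s, f i) ≠ 0 := hahn_ne_zero_of_coeff hne
  refine ⟨hnz, ?_⟩
  have hle : (∑ i ∈ s, f i).order ≤ m := HahnSeries.order_le_of_coeff_ne_zero hne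
  rcases lt_or_eq_of_le hle with hlt | heq
  · exfalso
    have hc := HahnSeries.coeff_order_eq_zero.not.2 hnz
    rw [_root_.coeff_sum] at hc
    refine hc (Finset.sum_eq_zero fun i hi => hge i hi _ hlt)
  · exact heq

end Hahn

section Tri
variable {K : Type*} [Field K] {r : ℕ}

lemma inv_lower {l : Matrix (Fin r) (Fin r) K} (hl : ∀ i j : Fin r, i < j → l i j = 0)
    (hdet : l.det ≠ 0) : ∀ i j : Fin r, i < j → l⁻¹ i j = 0 := by
  haveI : Invertible l := l.invertibleOfIsUnitDet (isUnit_iff_ne_zero.2 hdet)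
  have hbt : l.BlockTriangular OrderDual.toDual := by
    intro i j hij
    exact hl i j hij
  have h2 := Matrix.blockTriangular_inv_of_blockTriangular hbt
  intro i j hij
  exact h2 hij

lemma inv_upper {u : Matrix (Fin r) (Fin r) K} (hu : ∀ i j : Fin r, j < i → u i j = 0)
    (hdet : u.det ≠ 0) : ∀ i j : Fin r, j < i → u⁻¹ i j = 0 := by
  haveI : Invertible u := u.invertibleOfIsUnitDet (isUnit_iff_ne_zero.2 hdet)
  have hbt : u.BlockTriangular id := by
    intro i j hij
    exact hu i j hij
  have h2 := Matrix.blockTriangular_inv_of_blockTriangular hbt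
  intro i j hij
  exact h2 hij

end Tri

section DmatSec
variable {K : Type*} [Field K] {r : ℕ}

lemma DmatX_mul_DmatX (μ ν : Fin r → ℝ) :
    DmatX K μ * DmatX K ν = DmatX K (fun i => μ i + ν i) := by
  unfold DmatX Dmat
  rw [Matrix.diagonal_mul_diagonal]
  have h : (fun i => (HahnSeries.single (μ i) (1:K)) * HahnSeries.single (ν i) 1)
      = fun i => HahnSeries.single (μ i + ν i) (1:K) := by
    funext i; rw [HahnSeries.single_mul_single, mul_one]
  rw [h]

lemma DmatX_zero : DmatX K (fun _ : Fin r => (0:ℝ)) = 1 := by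
  unfold DmatX Dmat
  have : (fun i : Fin r => HahnSeries.single (0:ℝ) (1:K)) = fun _ => 1 := by
    funext i; exact HahnSeries.single_zero_one
  rw [this, Matrix.diagonal_one]

lemma DmatX_mul_neg (μ : Fin r → ℝ) : DmatX K μ * DmatX K (fun i => -μ i) = 1 := by
  rw [DmatX_mul_DmatX]
  simpa using DmatX_zero

lemma DmatX_neg_mul (μ : Fin r → ℝ) : DmatX K (fun i => -μ i) * DmatX K μ = 1 := by
  rw [DmatX_mul_DmatX]
  simpa using DmatX_zero

/-- The constant-coefficient embedding of a `K`-matrix. -/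
def Cmat {r : ℕ} (a : Matrix (Fin r) (Fin r) K) : Matrix (Fin r) (Fin r) (HahnSeries ℝ K) :=
  (HahnSeries.C : K →+* HahnSeries ℝ K).mapMatrix a

lemma Cmat_mul (a b : Matrix (Fin r) (Fin r) K) : Cmat a * Cmat b = Cmat (a * b) := by
  unfold Cmat
  rw [← _root_.map_mul]

lemma Cmat_one : Cmat (1 : Matrix (Fin r) (Fin r) K) = 1 := by
  unfold Cmat; rw [_root_.map_one]

lemma Cmat_apply (a : Matrix (Fin r) (Fin r) K) (i j : Fin r) :
    Cmat a i j = HahnSeries.single (0:ℝ) (a i j) := rfl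

/-- Entry formula for `D_α ⬝ C(a) ⬝ D_β`. -/
lemma DCD_apply (α β : Fin r → ℝ) (a : Matrix (Fin r) (Fin r) K) (i j : Fin r) :
    (DmatX K α * Cmat a * DmatX K β) i j = HahnSeries.single (α i + β j) (a i j) := by
  unfold DmatX Dmat
  rw [Matrix.mul_diagonal, Matrix.diagonal_mul, Cmat_apply]
  rw [HahnSeries.single_mul_single, HahnSeries.single_mul_single]
  rw [one_mul, mul_one, add_zero]

/-- Entry formula for a product of two twisted constant matrices. -/
lemma DCD_mul_apply (α β γ δ : Fin r → ℝ) (a b : Matrix (Fin r) (Fin r) K) (i j : Fin r) :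
    ((DmatX K α * Cmat a * DmatX K β) * (DmatX K γ * Cmat b * DmatX K δ)) i j
      = ∑ x : Fin r, HahnSeries.single (α i + β x + (γ x + δ j)) (a i x * b x j) := by
  rw [Matrix.mul_apply]
  refine Finset.sum_congr rfl (fun x _ => ?_)
  rw [DCD_apply, DCD_apply, HahnSeries.single_mul_single]

lemma inRR_DCD_mul (α β γ δ : Fin r → ℝ) (a b : Matrix (Fin r) (Fin r) K)
    (h : ∀ i x j : Fin r, a i x ≠ 0 → b x j ≠ 0 → 0 ≤ α i + β x + (γ x + δ j)) :
    ∀ i j, inRR (((DmatX K α * Cmat a * DmatX K β) * (DmatX K γ * Cmat b * DmatX K δ)) i j) := by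
  intro i j
  rw [DCD_mul_apply]
  refine inRR_sum (fun x _ => ?_)
  by_cases ha : a i x = 0
  · rw [ha, zero_mul, HahnSeries.single_eq_zero]; exact inRR_zero
  by_cases hb : b x j = 0
  · rw [hb, mul_zero, HahnSeries.single_eq_zero]; exact inRR_zero
  exact inRR_single (h i x j ha hb) _

end DmatSec



section Generic
variable {r : ℕ}

/-- Variables: `inl (i,a)` for entries of the lower-triangular matrix,
`inr (a,b)` for the upper-triangular one. -/
abbrev GVar (r : ℕ) := (Fin r × Fin r) ⊕ (Fin r × Fin r)

/-- Generic lower-triangular matrix of variables. -/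
noncomputable def LPmat (K : Type*) [Field K] (r : ℕ) :
    Matrix (Fin r) (Fin r) (MvPolynomial (GVar r) K) :=
  Matrix.of fun i a => if a ≤ i then MvPolynomial.X (Sum.inl (i, a)) else 0

/-- Generic upper-triangular matrix of variables. -/
noncomputable def UPmat (K : Type*) [Field K] (r : ℕ) :
    Matrix (Fin r) (Fin r) (MvPolynomial (GVar r) K) :=
  Matrix.of fun a b => if a ≤ b then MvPolynomial.X (Sum.inr (a, b)) else 0

variable (S : Matrix (Fin r) (Fin r) (HahnSeries ℝ K)) (μ : Fin r → ℝ)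

/-- Constraint set: pairs `(B, A)` of strictly monotone index maps with `B ≤ I`,
`B ≤ A` and `S_{AJ} ≠ 0`. -/
noncomputable def CSet (k : ℕ) (I J : Fin k → Fin r) :
    Finset ((Fin k → Fin r) × (Fin k → Fin r)) :=
  @Finset.filter _
    (fun q => (∀ s, q.1 s ≤ I s) ∧ (∀ s, q.1 s ≤ q.2 s) ∧ (S.submatrix q.2 J).det ≠ 0)
    (Classical.decPred _) (SMfin k r ×ˢ SMfin k r)

lemma mem_CSet {k : ℕ} {I J B A : Fin k → Fin r} :
    (B, A) ∈ CSet S k I J ↔ StrictMono B ∧ StrictMono A ∧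
      (∀ s, B s ≤ I s) ∧ (∀ s, B s ≤ A s) ∧ (S.submatrix A J).det ≠ 0 := by
  unfold CSet
  rw [@Finset.mem_filter _ _ (Classical.decPred _), Finset.mem_product]
  constructor
  · rintro ⟨⟨h1, h2⟩, h3, h4, h5⟩
    exact ⟨mem_SMfin.1 h1, mem_SMfin.1 h2, h3, h4, h5⟩
  · rintro ⟨h1, h2, h3, h4, h5⟩
    exact ⟨⟨mem_SMfin.2 h1, mem_SMfin.2 h2⟩, h3, h4, h5⟩

/-- The quantity minimized over the constraint set. -/
noncomputable def cfun (k : ℕ) (J : Fin k → Fin r) :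
    ((Fin k → Fin r) × (Fin k → Fin r)) → ℝ :=
  fun q => (∑ s, μ (q.1 s)) + (S.submatrix q.2 J).det.order

/-- The minimum. -/
noncomputable def nval (k : ℕ) (I J : Fin k → Fin r) : ℝ :=
  if h : (CSet S k I J).Nonempty then (CSet S k I J).inf' h (cfun S μ k J) else 0

lemma nval_le {k : ℕ} {I J B A : Fin k → Fin r} (h : (B, A) ∈ CSet S k I J) :
    nval S μ k I J ≤ (∑ s, μ (B s)) + (S.submatrix A J).det.order := by
  rw [nval, dif_pos ⟨(B, A), h⟩]
  exact Finset.inf'_le _ h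

noncomputable def cf (k : ℕ) (I J B A : Fin k → Fin r) : K :=
  (S.submatrix A J).det.coeff (nval S μ k I J - ∑ s, μ (B s))

/-- The leading-coefficient polynomial of the minor `(QS)_{IJ}`. -/
noncomputable def Vpoly (k : ℕ) (I J : Fin k → Fin r) : MvPolynomial (GVar r) K :=
  ∑ B ∈ SMfin k r, ∑ A ∈ SMfin k r,
    MvPolynomial.C (cf S μ k I J B A) * ((LPmat K r).submatrix I B).det
      * ((UPmat K r).submatrix B A).det

lemma eval_Vpoly (x : GVar r → K) (k : ℕ) (I J : Fin k → Fin r) :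
    MvPolynomial.eval x (Vpoly S μ k I J)
      = ∑ B ∈ SMfin k r, ∑ A ∈ SMfin k r, cf S μ k I J B A
          * (((LPmat K r).map (MvPolynomial.eval x)).submatrix I B).det
          * (((UPmat K r).map (MvPolynomial.eval x)).submatrix B A).det := by
  unfold Vpoly
  rw [map_sum]
  refine Finset.sum_congr rfl (fun B _ => ?_)
  rw [map_sum]
  refine Finset.sum_congr rfl (fun A _ => ?_)
  rw [_root_.map_mul, _root_.map_mul, MvPolynomial.eval_C,
    RingHom.map_det, RingHom.map_det]
  rfl

lemma Vpoly_ne_zero (k : ℕ) (I J : Fin k → Fin r) (hI : StrictMono I)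
    (hC : (CSet S k I J).Nonempty) : Vpoly S μ k I J ≠ 0 := by
  classical
  obtain ⟨q₀, hq₀mem, hq₀val⟩ := Finset.exists_mem_eq_inf' hC (cfun S μ k J)
  obtain ⟨B₀, A₀⟩ := q₀
  obtain ⟨hB₀sm, hA₀sm, hBI, hBA, hSA⟩ := (mem_CSet S).1 hq₀mem
  set pt : GVar r → K := fun v =>
    match v with
    | Sum.inl (i, a) => if (∃ s, I s = i ∧ B₀ s = a) then 1 else 0
    | Sum.inr (a, b) => if (∃ s, B₀ s = a ∧ A₀ s = b) then 1 else 0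
    with hpt
  intro hzero
  have heval := congrArg (MvPolynomial.eval pt) hzero
  rw [map_zero, eval_Vpoly] at heval
  set l₀ := (LPmat K r).map (MvPolynomial.eval pt) with hl₀def
  set u₀ := (UPmat K r).map (MvPolynomial.eval pt) with hu₀def
  have hl₀app : ∀ i a : Fin r, l₀ i a
      = if a ≤ i then (if (∃ s, I s = i ∧ B₀ s = a) then (1:K) else 0) else 0 := by
    intro i a
    rw [hl₀def, Matrix.map_apply, LPmat]
    by_cases h : a ≤ i
    · rw [Matrix.of_apply, if_pos h, if_pos h, MvPolynomial.eval_X]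
    · rw [Matrix.of_apply, if_neg h, if_neg h, map_zero]
  have hu₀app : ∀ a b : Fin r, u₀ a b
      = if a ≤ b then (if (∃ s, B₀ s = a ∧ A₀ s = b) then (1:K) else 0) else 0 := by
    intro a b
    rw [hu₀def, Matrix.map_apply, UPmat]
    by_cases h : a ≤ b
    · rw [Matrix.of_apply, if_pos h, if_pos h, MvPolynomial.eval_X]
    · rw [Matrix.of_apply, if_neg h, if_neg h, map_zero]
  have hl₀ : ∀ B ∈ SMfin k r, (l₀.submatrix I B).det = if B = B₀ then (1:K) else 0 := by
    intro B hB
    by_cases hBB : B = B₀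
    · subst hBB
      rw [if_pos rfl]
      have hid : l₀.submatrix I B = 1 := by
        ext s t
        rw [Matrix.submatrix_apply, hl₀app]
        by_cases hst : s = t
        · subst hst
          rw [if_pos (hBI s), if_pos ⟨s, rfl, rfl⟩, Matrix.one_apply_eq]
        · rw [Matrix.one_apply_ne hst]
          have hinner : ¬ (∃ s', I s' = I s ∧ B s' = B t) := by
            rintro ⟨s', h1, h2⟩
            exact hst ((hI.injective h1) ▸ (mem_SMfin.1 hB).injective h2)
          rw [if_neg hinner, ite_self]
      rw [hid, Matrix.det_one]
    · rw [if_neg hBB]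
      have hBsm := mem_SMfin.1 hB
      have hex : ∃ t, B t ∉ Set.range B₀ := by
        by_contra hcon
        push_neg at hcon
        exact hBB (strictMono_eq_of_range_subset hBsm hB₀sm hcon)
      obtain ⟨t, ht⟩ := hex
      refine Matrix.det_eq_zero_of_column_eq_zero t (fun s => ?_)
      rw [Matrix.submatrix_apply, hl₀app]
      have hinner : ¬ (∃ s', I s' = I s ∧ B₀ s' = B t) := by
        rintro ⟨s', _, h2⟩
        exact ht ⟨s', h2⟩
      rw [if_neg hinner, ite_self]
  have hu₀ : ∀ A ∈ SMfin k r, (u₀.submatrix B₀ A).det = if A = A₀ then (1:K) else 0 := by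
    intro A hA
    by_cases hAA : A = A₀
    · subst hAA
      rw [if_pos rfl]
      have hid : u₀.submatrix B₀ A = 1 := by
        ext s t
        rw [Matrix.submatrix_apply, hu₀app]
        by_cases hst : s = t
        · subst hst
          rw [if_pos (hBA s), if_pos ⟨s, rfl, rfl⟩, Matrix.one_apply_eq]
        · rw [Matrix.one_apply_ne hst]
          have hinner : ¬ (∃ s', B₀ s' = B₀ s ∧ A s' = A t) := by
            rintro ⟨s', h1, h2⟩
            exact hst ((hB₀sm.injective h1) ▸ (mem_SMfin.1 hA).injective h2)
          rw [if_neg hinner, ite_self]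
      rw [hid, Matrix.det_one]
    · rw [if_neg hAA]
      have hAsm := mem_SMfin.1 hA
      have hex : ∃ t, A t ∉ Set.range A₀ := by
        by_contra hcon
        push_neg at hcon
        exact hAA (strictMono_eq_of_range_subset hAsm hA₀sm hcon)
      obtain ⟨t, ht⟩ := hex
      refine Matrix.det_eq_zero_of_column_eq_zero t (fun s => ?_)
      rw [Matrix.submatrix_apply, hu₀app]
      have hinner : ¬ (∃ s', B₀ s' = B₀ s ∧ A₀ s' = A t) := by
        rintro ⟨s', _, h2⟩
        exact ht ⟨s', h2⟩
      rw [if_neg hinner, ite_self]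
  have hB₀mem : B₀ ∈ SMfin k r := mem_SMfin.2 hB₀sm
  have hA₀mem : A₀ ∈ SMfin k r := mem_SMfin.2 hA₀sm
  rw [Finset.sum_eq_single B₀ (fun B hB hBB => ?_) (fun h => absurd hB₀mem h)] at heval
  · rw [Finset.sum_eq_single A₀ (fun A hA hAA => ?_) (fun h => absurd hA₀mem h)] at heval
    · rw [hl₀ B₀ hB₀mem, if_pos rfl, hu₀ A₀ hA₀mem, if_pos rfl, mul_one, mul_one] at heval
      -- heval : 0 = cf S μ k I J B₀ A₀
      have hcf : cf S μ k I J B₀ A₀ ≠ 0 := by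
        unfold cf
        have hnv : nval S μ k I J = (∑ s, μ (B₀ s)) + (S.submatrix A₀ J).det.order := by
          rw [nval, dif_pos hC, hq₀val]; rfl
        rw [hnv]
        have harg : (∑ s, μ (B₀ s)) + (S.submatrix A₀ J).det.order - (∑ s, μ (B₀ s))
            = (S.submatrix A₀ J).det.order := by ring
        rw [harg]
        exact HahnSeries.coeff_order_eq_zero.not.2 hSA
      exact hcf heval
    · rw [hu₀ A hA, if_neg hAA, mul_zero]
  · exact Finset.sum_eq_zero (fun A _ => by rw [hl₀ B hB, if_neg hBB, mul_zero, zero_mul])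

end Generic



section MinorOrder
variable {r : ℕ}

lemma prod_single_one {k : ℕ} (f : Fin k → ℝ) :
    (∏ s : Fin k, HahnSeries.single (f s) (1:K)) = HahnSeries.single (∑ s, f s) 1 := by
  classical
  have h : ∀ (t : Finset (Fin k)),
      (∏ s ∈ t, HahnSeries.single (f s) (1:K)) = HahnSeries.single (∑ s ∈ t, f s) 1 := by
    intro t
    induction t using Finset.cons_induction with
    | empty => rw [Finset.prod_empty, Finset.sum_empty, HahnSeries.single_zero_one]
    | cons i t hit ih =>
      rw [Finset.prod_cons, Finset.sum_cons, ih, HahnSeries.single_mul_single, mul_one]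
  exact h Finset.univ

lemma det_submatrix_diag_mul {k : ℕ} (d : Fin r → HahnSeries ℝ K)
    (M : Matrix (Fin r) (Fin r) (HahnSeries ℝ K)) (I J : Fin k → Fin r) :
    (((Matrix.diagonal d) * M).submatrix I J).det
      = (∏ s, d (I s)) * (M.submatrix I J).det := by
  have h : ((Matrix.diagonal d) * M).submatrix I J
      = Matrix.diagonal (fun s => d (I s)) * M.submatrix I J := by
    ext s t
    rw [Matrix.submatrix_apply, Matrix.diagonal_mul, Matrix.diagonal_mul,
      Matrix.submatrix_apply]
  rw [h, Matrix.det_mul, Matrix.det_diagonal]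

lemma det_submatrix_mul_cb {k : ℕ} (M N : Matrix (Fin r) (Fin r) (HahnSeries ℝ K))
    (I J : Fin k → Fin r) :
    ((M * N).submatrix I J).det
      = ∑ g ∈ SMfin k r, (M.submatrix I g).det * (N.submatrix g J).det := by
  have h : (M * N).submatrix I J = (M.submatrix I id) * (N.submatrix id J) := by
    ext s t
    simp only [Matrix.submatrix_apply, Matrix.mul_apply, id]
  rw [h, cauchyBinet]
  refine Finset.sum_congr rfl fun g _ => ?_
  rw [Matrix.submatrix_submatrix, Matrix.submatrix_submatrix]
  simp only [Function.comp_id, Function.id_comp]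

lemma det_Cmat_submatrix {k : ℕ} (a : Matrix (Fin r) (Fin r) K) (I B : Fin k → Fin r) :
    ((Cmat a).submatrix I B).det = HahnSeries.single (0:ℝ) ((a.submatrix I B).det) := by
  have h1 : (Cmat a).submatrix I B
      = (HahnSeries.C : K →+* HahnSeries ℝ K).mapMatrix (a.submatrix I B) := rfl
  rw [h1, ← RingHom.map_det (HahnSeries.C : K →+* HahnSeries ℝ K) (a.submatrix I B)]
  rfl

lemma combine_singles (p q : ℝ) (c c' : K) (y : HahnSeries ℝ K) :
    HahnSeries.single p (1:K) * (HahnSeries.single (0:ℝ) c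
      * (HahnSeries.single q (1:K) * (HahnSeries.single (0:ℝ) c' * y)))
    = HahnSeries.single (p + q) (c * c') * y := by
  have h : HahnSeries.single p (1:K) * (HahnSeries.single (0:ℝ) c
      * (HahnSeries.single q (1:K) * (HahnSeries.single (0:ℝ) c' * y)))
      = (HahnSeries.single p (1:K) * HahnSeries.single (0:ℝ) c
        * HahnSeries.single q (1:K) * HahnSeries.single (0:ℝ) c') * y := by ring
  rw [h, HahnSeries.single_mul_single, HahnSeries.single_mul_single,
    HahnSeries.single_mul_single]
  norm_num

lemma minor_decomp (μ : Fin r → ℝ) (S : Matrix (Fin r) (Fin r) (HahnSeries ℝ K))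
    (l u : Matrix (Fin r) (Fin r) K) (k : ℕ) (I J : Fin k → Fin r) :
    ((((Dmat K (fun i => -μ i)) * Cmat l * Dmat K μ * Cmat u) * S).submatrix I J).det
      = ∑ B ∈ SMfin k r, ∑ A ∈ SMfin k r,
          HahnSeries.single ((∑ s, μ (B s)) - ∑ s, μ (I s))
            ((l.submatrix I B).det * (u.submatrix B A).det) * (S.submatrix A J).det := by
  have hassoc : ((Dmat K (fun i => -μ i)) * Cmat l * Dmat K μ * Cmat u) * S
      = (Dmat K (fun i => -μ i)) * (Cmat l * (Dmat K μ * (Cmat u * S))) := by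
    simp only [Matrix.mul_assoc]
  rw [hassoc]
  unfold Dmat
  rw [det_submatrix_diag_mul, prod_single_one, det_submatrix_mul_cb, Finset.mul_sum]
  refine Finset.sum_congr rfl (fun B _ => ?_)
  rw [det_Cmat_submatrix, det_submatrix_diag_mul, prod_single_one, det_submatrix_mul_cb]
  simp only [Finset.mul_sum]
  refine Finset.sum_congr rfl (fun A _ => ?_)
  rw [det_Cmat_submatrix, combine_singles]
  have hexp : (∑ s, -μ (I s)) + ∑ s, μ (B s) = (∑ s, μ (B s)) - ∑ s, μ (I s) := by
    rw [Finset.sum_neg_distrib]; ring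
  rw [hexp]

lemma minor_order_formula (μ : Fin r → ℝ) (S : Matrix (Fin r) (Fin r) (HahnSeries ℝ K))
    (l u : Matrix (Fin r) (Fin r) K)
    (hl : ∀ i j : Fin r, i < j → l i j = 0) (hu : ∀ i j : Fin r, j < i → u i j = 0)
    (k : ℕ) (I J : Fin k → Fin r) (hI : StrictMono I)
    (hV : (∑ B ∈ SMfin k r, ∑ A ∈ SMfin k r, cf S μ k I J B A
          * (l.submatrix I B).det * (u.submatrix B A).det) ≠ 0) :
    ((((Dmat K (fun i => -μ i)) * Cmat l * Dmat K μ * Cmat u) * S).submatrix I J).det ≠ 0 ∧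
    ((((Dmat K (fun i => -μ i)) * Cmat l * Dmat K μ * Cmat u) * S).submatrix I J).det.order
      = nval S μ k I J - ∑ s, μ (I s) := by
  classical
  rw [minor_decomp]
  set m : ℝ := nval S μ k I J - ∑ s, μ (I s) with hm
  set F : (Fin k → Fin r) → (Fin k → Fin r) → HahnSeries ℝ K := fun B A =>
    HahnSeries.single ((∑ s, μ (B s)) - ∑ s, μ (I s))
      ((l.submatrix I B).det * (u.submatrix B A).det) * (S.submatrix A J).det with hF
  have hflat : (∑ B ∈ SMfin k r, ∑ A ∈ SMfin k r, F B A)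
      = ∑ q ∈ (SMfin k r) ×ˢ (SMfin k r), F q.1 q.2 :=
    (Finset.sum_product' (SMfin k r) (SMfin k r) F).symm
  rw [hflat]
  refine order_sum_eq (fun q hq y hy => ?_) ?_
  · obtain ⟨B, A⟩ := q
    rw [Finset.mem_product] at hq
    have hBsm := mem_SMfin.1 hq.1
    have hAsm := mem_SMfin.1 hq.2
    simp only [hF]
    rw [_root_.coeff_single_mul]
    by_cases hdl : (l.submatrix I B).det = 0
    · rw [hdl, zero_mul, zero_mul]
    by_cases hdu : (u.submatrix B A).det = 0
    · rw [hdu, mul_zero, zero_mul]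
    by_cases hdS : (S.submatrix A J).det = 0
    · rw [hdS]; simp
    have hBI : ∀ s, B s ≤ I s := by
      by_contra hcon
      push_neg at hcon
      obtain ⟨s, hs⟩ := hcon
      exact hdl (det_submatrix_lower_eq_zero hl hI.monotone hBsm.monotone ⟨s, hs⟩)
    have hBA : ∀ s, B s ≤ A s := by
      by_contra hcon
      push_neg at hcon
      obtain ⟨s, hs⟩ := hcon
      exact hdu (det_submatrix_upper_eq_zero hu hBsm.monotone hAsm.monotone ⟨s, hs⟩)
    have hmem : (B, A) ∈ CSet S k I J := (mem_CSet S).2 ⟨hBsm, hAsm, hBI, hBA, hdS⟩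
    have hle := nval_le S μ hmem
    have hcoe : (S.submatrix A J).det.coeff (y - ((∑ s, μ (B s)) - ∑ s, μ (I s))) = 0 := by
      apply HahnSeries.coeff_eq_zero_of_lt_order
      have hym : y < m := hy
      rw [hm] at hym
      linarith [hle]
    rw [hcoe, mul_zero]
  · rw [_root_.coeff_sum]
    have hterm : ∀ q ∈ (SMfin k r) ×ˢ (SMfin k r), (F q.1 q.2).coeff m
        = cf S μ k I J q.1 q.2 * (l.submatrix I q.1).det * (u.submatrix q.1 q.2).det := by
      intro q _
      simp only [hF]
      rw [_root_.coeff_single_mul]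
      have harg : m - ((∑ s, μ (q.1 s)) - ∑ s, μ (I s))
          = nval S μ k I J - ∑ s, μ (q.1 s) := by
        rw [hm]; ring
      rw [harg]
      unfold cf
      ring
    rw [Finset.sum_congr rfl hterm,
      Finset.sum_product' (SMfin k r) (SMfin k r)
        (fun B A => cf S μ k I J B A * (l.submatrix I B).det * (u.submatrix B A).det)]
    exact hV

end MinorOrder



section Exists
variable {r : ℕ}

lemma CSet_nonempty (S : Matrix (Fin r) (Fin r) (HahnSeries ℝ K)) (hS : S.det ≠ 0)
    {k : ℕ} (hkr : k ≤ r) (I J : Fin k → Fin r) (hI : StrictMono I) (hJ : StrictMono J) :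
    (CSet S k I J).Nonempty := by
  have hTS : S⁻¹ * S = 1 := Matrix.nonsing_inv_mul S (isUnit_iff_ne_zero.2 hS)
  have hsub : ((S⁻¹ * S).submatrix J J).det = 1 := by
    rw [hTS]
    have hone : (1 : Matrix (Fin r) (Fin r) (HahnSeries ℝ K)).submatrix J J
        = (1 : Matrix (Fin k) (Fin k) (HahnSeries ℝ K)) := by
      ext s t
      by_cases hst : s = t
      · subst hst
        rw [Matrix.submatrix_apply, Matrix.one_apply_eq, Matrix.one_apply_eq]
      · rw [Matrix.submatrix_apply, Matrix.one_apply_ne (fun h => hst (hJ.injective h)),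
          Matrix.one_apply_ne hst]
    rw [hone, Matrix.det_one]
  rw [det_submatrix_mul_cb] at hsub
  have hex : ∃ A ∈ SMfin k r, (S.submatrix A J).det ≠ 0 := by
    by_contra hcon
    push_neg at hcon
    rw [Finset.sum_eq_zero (fun A hA => by rw [hcon A hA, mul_zero])] at hsub
    exact one_ne_zero hsub.symm
  obtain ⟨A, hAmem, hA⟩ := hex
  have hAsm := mem_SMfin.1 hAmem
  have hB₀sm : StrictMono (fun s : Fin k => Fin.castLE hkr s) := by
    intro a b hab
    rw [Fin.lt_def] at hab ⊢
    simpa only [Fin.coe_castLE] using hab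
  refine ⟨((fun s : Fin k => Fin.castLE hkr s), A), (mem_CSet S).2
    ⟨hB₀sm, hAsm, fun s => ?_, fun s => ?_, hA⟩⟩
  · have h1 := fin_le_apply_of_strictMono hI s
    rw [Fin.le_def]
    simpa only [Fin.coe_castLE] using h1
  · have h1 := fin_le_apply_of_strictMono hAsm s
    rw [Fin.le_def]
    simpa only [Fin.coe_castLE] using h1

lemma exists_good_point (μ : Fin r → ℝ) (S : Matrix (Fin r) (Fin r) (HahnSeries ℝ K)) :
    ∃ x : GVar r → K,
      ((LPmat K r).map (MvPolynomial.eval x)).det ≠ 0 ∧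
      ((UPmat K r).map (MvPolynomial.eval x)).det ≠ 0 ∧
      ∀ (k : Fin (r+1)) (I J : Fin (k : ℕ) → Fin r), StrictMono I →
        (CSet S (k : ℕ) I J).Nonempty →
        MvPolynomial.eval x (Vpoly S μ (k : ℕ) I J) ≠ 0 := by
  classical
  set TT := (Σ k : Fin (r+1), (Fin (k : ℕ) → Fin r) × (Fin (k : ℕ) → Fin r)) with hTT
  set P' : TT → MvPolynomial (GVar r) K := fun T =>
    if (StrictMono T.2.1 ∧ (CSet S (T.1 : ℕ) T.2.1 T.2.2).Nonempty) then
      Vpoly S μ (T.1 : ℕ) T.2.1 T.2.2 else 1 with hP'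
  have hLP : (LPmat K r).det ≠ 0 := by
    have hbt : (LPmat K r).BlockTriangular OrderDual.toDual := by
      intro i j hij
      have : ¬ (j ≤ i) := not_le.2 hij
      simp only [LPmat, Matrix.of_apply, if_neg this]
    rw [Matrix.det_of_lowerTriangular _ hbt]
    refine Finset.prod_ne_zero_iff.2 (fun i _ => ?_)
    simp only [LPmat, Matrix.of_apply, if_pos (le_refl i)]
    exact MvPolynomial.X_ne_zero _
  have hUP : (UPmat K r).det ≠ 0 := by
    have hbt : (UPmat K r).BlockTriangular id := by
      intro i j hij
      have : ¬ (i ≤ j) := not_le.2 hij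
      simp only [UPmat, Matrix.of_apply, if_neg this]
    rw [Matrix.det_of_upperTriangular hbt]
    refine Finset.prod_ne_zero_iff.2 (fun i _ => ?_)
    simp only [UPmat, Matrix.of_apply, if_pos (le_refl i)]
    exact MvPolynomial.X_ne_zero _
  have hP'ne : ∀ T : TT, P' T ≠ 0 := by
    intro T
    simp only [hP']
    split_ifs with h
    · exact Vpoly_ne_zero S μ _ T.2.1 T.2.2 h.1 h.2
    · exact one_ne_zero
  have hBig : (LPmat K r).det * (UPmat K r).det * ∏ T : TT, P' T ≠ 0 :=
    mul_ne_zero (mul_ne_zero hLP hUP) (Finset.prod_ne_zero_iff.2 (fun T _ => hP'ne T))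
  have hx : ∃ x : GVar r → K,
      MvPolynomial.eval x ((LPmat K r).det * (UPmat K r).det * ∏ T : TT, P' T) ≠ 0 := by
    by_contra hcon
    push_neg at hcon
    refine hBig (MvPolynomial.funext (fun x => ?_))
    rw [hcon x, map_zero]
  obtain ⟨x, hx⟩ := hx
  rw [_root_.map_mul, _root_.map_mul, map_prod] at hx
  have h1 : MvPolynomial.eval x (LPmat K r).det ≠ 0 := fun h => hx (by rw [h]; ring)
  have h2 : MvPolynomial.eval x (UPmat K r).det ≠ 0 := fun h => hx (by rw [h]; ring)
  have h3 : ∀ T : TT, MvPolynomial.eval x (P' T) ≠ 0 := by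
    intro T hT
    refine hx ?_
    rw [Finset.prod_eq_zero (Finset.mem_univ T) hT]
    ring
  refine ⟨x, ?_, ?_, ?_⟩
  · rw [show (LPmat K r).map (MvPolynomial.eval x)
      = (MvPolynomial.eval x : MvPolynomial (GVar r) K →+* K).mapMatrix (LPmat K r) from rfl,
      ← RingHom.map_det]
    exact h1
  · rw [show (UPmat K r).map (MvPolynomial.eval x)
      = (MvPolynomial.eval x : MvPolynomial (GVar r) K →+* K).mapMatrix (UPmat K r) from rfl,
      ← RingHom.map_det]
    exact h2
  · intro k I J hI hC
    have hT := h3 ⟨k, (I, J)⟩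
    simp only [hP'] at hT
    rw [if_pos ⟨hI, hC⟩] at hT
    exact hT

end Exists



section Admiss
variable {r : ℕ}

lemma muAdmissible_of (μ : Fin r → ℝ) (hμ : Antitone μ) (l u : Matrix (Fin r) (Fin r) K)
    (hl : ∀ i j : Fin r, i < j → l i j = 0) (hu : ∀ i j : Fin r, j < i → u i j = 0)
    (hld : l.det ≠ 0) (hud : u.det ≠ 0) :
    MuAdmissible μ (Dmat K (fun i => -μ i) * Cmat l * Dmat K μ * Cmat u) := by
  set D := Dmat K μ with hD
  set Dn := Dmat K (fun i => -μ i) with hDn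
  set D0 := Dmat K (fun _ : Fin r => (0:ℝ)) with hD0
  set Lc := Cmat l with hLc
  set Uc := Cmat u with hUc
  set Li := Cmat l⁻¹ with hLi
  set Ui := Cmat u⁻¹ with hUi
  have hLL : Lc * Li = 1 := by
    rw [hLc, hLi, Cmat_mul, Matrix.mul_nonsing_inv _ (isUnit_iff_ne_zero.2 hld), Cmat_one]
  have hLiL : Li * Lc = 1 := by
    rw [hLc, hLi, Cmat_mul, Matrix.nonsing_inv_mul _ (isUnit_iff_ne_zero.2 hld), Cmat_one]
  have hUU : Uc * Ui = 1 := by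
    rw [hUc, hUi, Cmat_mul, Matrix.mul_nonsing_inv _ (isUnit_iff_ne_zero.2 hud), Cmat_one]
  have hUiU : Ui * Uc = 1 := by
    rw [hUc, hUi, Cmat_mul, Matrix.nonsing_inv_mul _ (isUnit_iff_ne_zero.2 hud), Cmat_one]
  have hDDn : D * Dn = 1 := DmatX_mul_neg μ
  have hDnD : Dn * D = 1 := DmatX_neg_mul μ
  have hD01 : D0 = 1 := DmatX_zero
  have hDinv : D⁻¹ = Dn := Matrix.inv_eq_right_inv hDDn
  -- cancellation helpers
  have cD : ∀ X : Matrix (Fin r) (Fin r) (HahnSeries ℝ K), D * (Dn * X) = X := fun X => by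
    rw [← Matrix.mul_assoc, hDDn, Matrix.one_mul]
  have cDn : ∀ X : Matrix (Fin r) (Fin r) (HahnSeries ℝ K), Dn * (D * X) = X := fun X => by
    rw [← Matrix.mul_assoc, hDnD, Matrix.one_mul]
  have cL : ∀ X : Matrix (Fin r) (Fin r) (HahnSeries ℝ K), Lc * (Li * X) = X := fun X => by
    rw [← Matrix.mul_assoc, hLL, Matrix.one_mul]
  have cLi : ∀ X : Matrix (Fin r) (Fin r) (HahnSeries ℝ K), Li * (Lc * X) = X := fun X => by
    rw [← Matrix.mul_assoc, hLiL, Matrix.one_mul]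
  have cU : ∀ X : Matrix (Fin r) (Fin r) (HahnSeries ℝ K), Uc * (Ui * X) = X := fun X => by
    rw [← Matrix.mul_assoc, hUU, Matrix.one_mul]
  have cUi : ∀ X : Matrix (Fin r) (Fin r) (HahnSeries ℝ K), Ui * (Uc * X) = X := fun X => by
    rw [← Matrix.mul_assoc, hUiU, Matrix.one_mul]
  have hlinv := inv_lower hl hld
  have huinv := inv_upper hu hud
  constructor
  · -- InGLR Q
    constructor
    · -- entries of Q
      intro i j
      have hform : Dn * Lc * D * Uc = (Dn * Lc * D) * ((D0 * Uc) * D0) := by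
        rw [hD01, Matrix.one_mul, Matrix.mul_one]
      rw [hform]
      refine inRR_DCD_mul _ _ _ _ l u (fun i' x j' ha hb => ?_) i j
      have hxi : x ≤ i' := by
        by_contra hcon
        exact ha (hl i' x (not_le.1 hcon))
      have := hμ hxi
      simp only [add_zero]
      linarith
    · -- inverse of Q
      refine ⟨((D0 * Ui) * D0) * (Dn * Li * D), ?_, ?_, ?_⟩
      · intro i j
        refine inRR_DCD_mul _ _ _ _ u⁻¹ l⁻¹ (fun i' x j' ha hb => ?_) i j
        have hjx : j' ≤ x := by
          by_contra hcon
          exact hb (hlinv x j' (not_le.1 hcon))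
        have := hμ hjx
        simp only [zero_add, add_zero]
        linarith
      · -- Q * N = 1
        rw [hD01, Matrix.one_mul, Matrix.mul_one]
        simp only [Matrix.mul_assoc]
        rw [cU, cD, cL, hDnD]
      · -- N * Q = 1
        rw [hD01, Matrix.one_mul, Matrix.mul_one]
        simp only [Matrix.mul_assoc]
        rw [cD, cLi, cDn, hUiU]
  · -- InGLR (D * Q * D⁻¹)
    rw [hDinv]
    have hform : D * (Dn * Lc * D * Uc) * Dn = ((D0 * Lc) * D0) * ((D * Uc) * Dn) := by
      rw [hD01, Matrix.one_mul, Matrix.mul_one]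
      simp only [Matrix.mul_assoc]
      rw [cD]
    constructor
    · intro i j
      rw [hform]
      refine inRR_DCD_mul _ _ _ _ l u (fun i' x j' ha hb => ?_) i j
      have hxj : x ≤ j' := by
        by_contra hcon
        exact hb (hu x j' (not_le.1 hcon))
      have := hμ hxj
      simp only [add_zero, zero_add]
      linarith
    · refine ⟨((D * Ui) * Dn) * ((D0 * Li) * D0), ?_, ?_, ?_⟩
      · intro i j
        refine inRR_DCD_mul _ _ _ _ u⁻¹ l⁻¹ (fun i' x j' ha hb => ?_) i j
        have hix : i' ≤ x := by
          by_contra hcon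
          exact ha (huinv i' x (not_le.1 hcon))
        have := hμ hix
        simp only [add_zero]
        linarith
      · rw [hform, hD01, Matrix.one_mul, Matrix.one_mul, Matrix.mul_one, Matrix.mul_one]
        simp only [Matrix.mul_assoc]
        rw [cDn, cU, cD, hLL]
      · rw [hform, hD01, Matrix.one_mul, Matrix.one_mul, Matrix.mul_one, Matrix.mul_one]
        simp only [Matrix.mul_assoc]
        rw [cLi, cDn, cUi, hDDn]
  
end Admiss


/-- Existence of a generic `μ`-admissible left factor `Q`: for all index
sets `I ⊆ H ⊆ J` of equal length `k`, `1 ≤ k ≤ r`, the minors `(QS)_{IJ}, (QS)_{HJ}` are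
nonzero and `‖(QS)_{IJ}‖ ≤ ‖(QS)_{HJ}‖ ≤ ‖(QS)_{IJ}‖ + |μ_I| − |μ_H|`. -/
theorem generic_row_factor {r : ℕ} (μ : Fin r → ℝ) (hμ : Antitone μ)
    (S : Matrix (Fin r) (Fin r) (HahnSeries ℝ K)) (hS : S.det ≠ 0) :
    ∃ Q : Matrix (Fin r) (Fin r) (HahnSeries ℝ K), MuAdmissible μ Q ∧
      ∀ (k : ℕ), 1 ≤ k → k ≤ r → ∀ (I H J : Fin k → Fin r),
        StrictMono I → StrictMono H → StrictMono J →
        (∀ s, I s ≤ H s) → (∀ s, H s ≤ J s) →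
        minorDet (Q * S) I J ≠ 0 ∧ minorDet (Q * S) H J ≠ 0 ∧
        (minorDet (Q * S) I J).order ≤ (minorDet (Q * S) H J).order ∧
        (minorDet (Q * S) H J).order ≤
          (minorDet (Q * S) I J).order + (∑ s, μ (I s)) - ∑ s, μ (H s) := by
  obtain ⟨x, hld, hud, hVall⟩ := exists_good_point μ S
  set l := (LPmat K r).map (MvPolynomial.eval x) with hldef
  set u := (UPmat K r).map (MvPolynomial.eval x) with hudef
  have hl : ∀ i j : Fin r, i < j → l i j = 0 := by
    intro i j hij
    rw [hldef, Matrix.map_apply]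
    simp only [LPmat, Matrix.of_apply, if_neg (not_le.2 hij), map_zero]
  have hu : ∀ i j : Fin r, j < i → u i j = 0 := by
    intro i j hij
    rw [hudef, Matrix.map_apply]
    simp only [UPmat, Matrix.of_apply, if_neg (not_le.2 hij), map_zero]
  refine ⟨Dmat K (fun i => -μ i) * Cmat l * Dmat K μ * Cmat u,
    muAdmissible_of μ hμ l u hl hu hld hud, ?_⟩
  intro k hk1 hkr I H J hI hH hJ hIH hHJ
  have hCI := CSet_nonempty S hS hkr I J hI hJ
  have hCH := CSet_nonempty S hS hkr H J hH hJ
  have hVI := hVall ⟨k, by omega⟩ I J hI hCI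
  have hVH := hVall ⟨k, by omega⟩ H J hH hCH
  rw [eval_Vpoly] at hVI hVH
  have hMI := minor_order_formula μ S l u hl hu k I J hI hVI
  have hMH := minor_order_formula μ S l u hl hu k H J hH hVH
  have eI : (minorDet ((Dmat K (fun i => -μ i) * Cmat l * Dmat K μ * Cmat u) * S) I J).order
      = nval S μ k I J - ∑ s, μ (I s) := hMI.2
  have eH : (minorDet ((Dmat K (fun i => -μ i) * Cmat l * Dmat K μ * Cmat u) * S) H J).order
      = nval S μ k H J - ∑ s, μ (H s) := hMH.2
  refine ⟨hMI.1, hMH.1, ?_, ?_⟩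
  · rw [eI, eH]
    obtain ⟨q, hqmem, hqval⟩ := Finset.exists_mem_eq_inf' hCH (cfun S μ k J)
    obtain ⟨B, A⟩ := q
    obtain ⟨hBsm, hAsm, hBH, hBA, hSA⟩ := (mem_CSet S).1 hqmem
    have hnH : nval S μ k H J = (∑ s, μ (B s)) + (S.submatrix A J).det.order := by
      rw [nval, dif_pos hCH, hqval]
      rfl
    have hB'sm : StrictMono (fun s : Fin k => min (B s) (I s)) := fun a b hab =>
      lt_min (lt_of_le_of_lt (min_le_left _ _) (hBsm hab))
        (lt_of_le_of_lt (min_le_right _ _) (hI hab))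
    have hmemI : ((fun s : Fin k => min (B s) (I s)), A) ∈ CSet S k I J := (mem_CSet S).2
      ⟨hB'sm, hAsm, fun s => min_le_right _ _, fun s => le_trans (min_le_left _ _) (hBA s), hSA⟩
    have h1 := nval_le S μ hmemI
    have h2 : (∑ s, μ (min (B s) (I s))) + (∑ s, μ (H s))
        ≤ (∑ s, μ (B s)) + ∑ s, μ (I s) := by
      rw [← Finset.sum_add_distrib, ← Finset.sum_add_distrib]
      refine Finset.sum_le_sum (fun s _ => ?_)
      rcases le_total (B s) (I s) with h | h
      · rw [min_eq_left h]
        have := hμ (hIH s)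
        linarith
      · rw [min_eq_right h]
        have := hμ (hBH s)
        linarith
    linarith
  · rw [eI, eH]
    obtain ⟨q, hqmem, hqval⟩ := Finset.exists_mem_eq_inf' hCI (cfun S μ k J)
    obtain ⟨B, A⟩ := q
    obtain ⟨hBsm, hAsm, hBI, hBA, hSA⟩ := (mem_CSet S).1 hqmem
    have hnI : nval S μ k I J = (∑ s, μ (B s)) + (S.submatrix A J).det.order := by
      rw [nval, dif_pos hCI, hqval]
      rfl
    have hmemH : (B, A) ∈ CSet S k H J := (mem_CSet S).2
      ⟨hBsm, hAsm, fun s => le_trans (hBI s) (hIH s), hBA, hSA⟩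
    have h1 := nval_le S μ hmemH
    linarith

end
end

section
/- Let ν = (ν_1 ≥ … ≥ ν_r) be an ℝ-partition and let S ∈ M_r(𝓕) be of full rank. Then there exists a ν̂-admissible matrix T ∈ GL_r(R) such that for all index sets I ⊆ H ⊆ J of equal length k with 1 ≤ k ≤ r, the minors (ST)_{IJ} and (ST)_{IH} are nonzero and ‖(ST)_{IJ}‖ ≤ ‖(ST)_{IH}‖ ≤ ‖(ST)_{IJ}‖ + |ν̂_J| − |ν̂_H|, where ν̂ = (ν_r, ν_{r−1}, …, ν_1). -/
open Matrix HahnSeries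

noncomputable section

variable {K : Type*} [Field K] [CharZero K]

namespace GCF
open Matrix HahnSeries
variable {K : Type*} [Field K] [CharZero K]
set_option linter.unusedSectionVars false




def Rsub (K : Type*) [Field K] : Subring (HahnSeries ℝ K) where
  carrier := {a | a = 0 ∨ 0 ≤ a.order}
  zero_mem' := Or.inl rfl
  one_mem' := Or.inr (le_of_eq HahnSeries.order_one.symm)
  add_mem' := by
    rintro a b (rfl | ha) hb
    · simpa using hb
    rcases hb with rfl | hb
    · simpa using Or.inr ha
    by_cases h : a + b = 0
    · exact Or.inl h
    · exact Or.inr (le_trans (le_min ha hb) (HahnSeries.min_order_le_order_add h))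
  neg_mem' := by
    rintro a (rfl | ha)
    · simp
    · exact Or.inr (by rwa [HahnSeries.order_neg])
  mul_mem' := by
    rintro a b (rfl | ha) hb
    · simp
    rcases hb with rfl | hb
    · simp
    by_cases h0 : a = 0
    · simp [h0]
    by_cases h1 : b = 0
    · simp [h1]
    · exact Or.inr (by rw [HahnSeries.order_mul h0 h1]; exact add_nonneg ha hb)

lemma mem_Rsub_iff {a : HahnSeries ℝ K} : a ∈ Rsub K ↔ inR a := Iff.rfl

lemma coeff_sum {ι : Type*} (s : Finset ι) (f : ι → HahnSeries ℝ K) (x : ℝ) :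
    (∑ i ∈ s, f i).coeff x = ∑ i ∈ s, (f i).coeff x :=
  map_sum (HahnSeries.coeff.addMonoidHom x) f s

lemma order_eq_of_coeff {x : HahnSeries ℝ K} {m : ℝ} (h1 : x.coeff m ≠ 0)
    (h2 : ∀ y, y < m → x.coeff y = 0) : x ≠ 0 ∧ x.order = m := by
  have hx : x ≠ 0 := by rintro rfl; simp at h1
  refine ⟨hx, le_antisymm (HahnSeries.order_le_of_coeff_ne_zero h1) ?_⟩
  by_contra h
  push_neg at h
  exact (mt HahnSeries.coeff_order_eq_zero.mp hx) (h2 _ h)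

lemma prod_single {ι : Type*} (s : Finset ι) (a : ι → ℝ) (b : ι → K) :
    (∏ i ∈ s, HahnSeries.single (a i) (b i)) =
      HahnSeries.single (∑ i ∈ s, a i) (∏ i ∈ s, b i) := by
  classical
  induction s using Finset.induction_on with
  | empty => simp
  | insert _ _ h ih =>
      rw [Finset.prod_insert h, Finset.sum_insert h, Finset.prod_insert h, ih,
        HahnSeries.single_mul_single]

lemma order_inv {x : HahnSeries ℝ K} (hx : x ≠ 0) : (x⁻¹).order = -x.order := by
  have h2 : x⁻¹ ≠ 0 := inv_ne_zero hx
  have h3 : x.order + (x⁻¹).order = 0 := by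
    rw [← HahnSeries.order_mul hx h2, mul_inv_cancel₀ hx, HahnSeries.order_one]
  linarith

lemma inGLR_of {r : ℕ} {M : Matrix (Fin r) (Fin r) (HahnSeries ℝ K)}
    (hM : ∀ i j, inR (M i j)) (hdet : M.det ≠ 0) (hord : M.det.order = 0) : InGLR M := by
  have hu : IsUnit M.det := isUnit_iff_ne_zero.mpr hdet
  refine ⟨hM, M⁻¹, ?_, Matrix.mul_nonsing_inv M hu, Matrix.nonsing_inv_mul M hu⟩
  have hadj : ∀ i j, inR (M.adjugate i j) := by
    intro i j
    let M₀ : Matrix (Fin r) (Fin r) (Rsub K) := Matrix.of fun i j => (⟨M i j, hM i j⟩ : Rsub K)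
    have hmap : ((Rsub K).subtype).mapMatrix M₀ = M := by ext i j; rfl
    have h2 := RingHom.map_adjugate ((Rsub K).subtype) M₀
    rw [hmap] at h2
    rw [← h2]
    exact (M₀.adjugate i j).2
  intro i j
  rw [Matrix.inv_def]
  have h3 : (Ring.inverse M.det • M.adjugate) i j = Ring.inverse M.det * M.adjugate i j := rfl
  rw [h3, Ring.inverse_eq_inv']
  have h4 : inR (M.det⁻¹) := Or.inr (by rw [order_inv hdet, hord]; simp)
  exact mem_Rsub_iff.mp ((Rsub K).mul_mem (mem_Rsub_iff.mpr h4) (mem_Rsub_iff.mpr (hadj i j)))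


lemma det_mul_expand {k r : ℕ} {F : Type*} [CommRing F]
    (A : Matrix (Fin k) (Fin r) F) (B : Matrix (Fin r) (Fin k) F) :
    (A * B).det = ∑ g : Fin k → Fin r, (∏ s, B (g s) s) * (A.submatrix id g).det := by
  rw [← Matrix.det_transpose, Matrix.transpose_mul]
  have h1 : ∀ s : Fin k, (Bᵀ * Aᵀ) s = ∑ c : Fin r, B c s • Aᵀ c := by
    intro s; funext j
    simp [Matrix.mul_apply, Finset.sum_apply, mul_comm]
  have h2 : Bᵀ * Aᵀ = Matrix.of fun (s : Fin k) (j : Fin k) =>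
      (∑ c : Fin r, B c s • Aᵀ c) j := by
    ext s j
    exact congrFun (h1 s) j
  rw [h2]
  have h3 : (Matrix.of fun (s : Fin k) (j : Fin k) => (∑ c : Fin r, B c s • Aᵀ c) j).det
      = (Matrix.detRowAlternating : (Fin k → F) [⋀^Fin k]→ₗ[F] F).toMultilinearMap
        (fun s : Fin k => ∑ c : Fin r, B c s • Aᵀ c) := rfl
  rw [h3, MultilinearMap.map_sum]
  refine Finset.sum_congr rfl fun g _ => ?_
  rw [MultilinearMap.map_smul_univ, smul_eq_mul]
  congr 1
  rw [← Matrix.det_transpose (A.submatrix id g)]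
  rfl

lemma exists_nonzero_minor {F : Type*} [Field F] :
    ∀ (k r : ℕ) (v : Fin k → Fin r → F), LinearIndependent F v →
      ∃ g : Fin k → Fin r, (Matrix.of fun s t => v s (g t)).det ≠ 0 := by
  intro k
  induction k with
  | zero =>
      intro r v _
      exact ⟨Fin.elim0, by rw [Matrix.det_fin_zero]; exact one_ne_zero⟩
  | succ k ih =>
      intro r v hv
      have hw : LinearIndependent F (v ∘ Fin.succ) := hv.comp Fin.succ (Fin.succ_injective k)
      obtain ⟨g, hg⟩ := ih r _ hw
      set B : Matrix (Fin k) (Fin k) F := Matrix.of fun s t => v s.succ (g t) with hB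
      have hBdet : B.det ≠ 0 := hg
      set α : Fin k → F := Matrix.vecMul (fun t => v 0 (g t)) B⁻¹ with hα
      have hαB : Matrix.vecMul α B = fun t => v 0 (g t) := by
        rw [hα, Matrix.vecMul_vecMul, Matrix.nonsing_inv_mul B (isUnit_iff_ne_zero.mpr hBdet),
          Matrix.vecMul_one]
      set u : Fin r → F := v 0 - ∑ s, α s • v s.succ with hu
      have hu0 : u ≠ 0 := by
        intro h
        have h2 : ∑ i, (Fin.cases (-1 : F) α : Fin (k+1) → F) i • v i = 0 := by
          rw [Fin.sum_univ_succ]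
          simp only [Fin.cases_zero, Fin.cases_succ]
          rw [hu] at h
          rw [sub_eq_zero.mp h]
          simp [neg_smul]
        have := Fintype.linearIndependent_iff.mp hv _ h2 0
        simp at this
      obtain ⟨cc, hcc⟩ := Function.ne_iff.mp hu0
      have hcg : ∀ t, u (g t) = 0 := by
        intro t
        have h3 : (∑ s, α s • v s.succ) (g t) = Matrix.vecMul α B t := by
          rw [Matrix.vecMul]
          simp [dotProduct, Finset.sum_apply, hB]
        have h4 := congrFun hαB t
        rw [hu]
        simp only [Pi.sub_apply]
        rw [h3, h4]
        ring
      set g' : Fin (k+1) → Fin r := Fin.cases cc g with hg'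
      set M : Matrix (Fin (k+1)) (Fin (k+1)) F := Matrix.of fun s t => v s (g' t) with hM
      refine ⟨g', ?_⟩
      set M' : Matrix (Fin (k+1)) (Fin (k+1)) F := M.updateRow 0 (fun t => u (g' t)) with hM'
      have hrow : M 0 = (fun t => u (g' t)) + ∑ x : Fin (k+1),
          (Fin.cases (0 : F) α : Fin (k+1) → F) x • M x := by
        funext t
        rw [Fin.sum_univ_succ]
        simp only [Fin.cases_zero, Fin.cases_succ, zero_smul, zero_add]
        simp only [hu, hM, Pi.add_apply, Pi.sub_apply, Finset.sum_apply, Pi.smul_apply,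
          smul_eq_mul, Matrix.of_apply]
        ring
      have hdetM : M.det = M'.det := by
        have e1 : M.det = (M.updateRow 0 (M 0)).det := by rw [Matrix.updateRow_eq_self]
        rw [e1, hrow, Matrix.det_updateRow_add, Matrix.det_updateRow_sum]
        simp [hM']
      have hsub : M'.submatrix Fin.succ Fin.succ = B := by
        ext s t
        simp only [Matrix.submatrix_apply, hM']
        rw [Matrix.updateRow_ne (Fin.succ_ne_zero s)]
        simp [hM, hg', hB]
      have hdetM' : M'.det = u cc * B.det := by
        rw [Matrix.det_succ_row_zero]
        rw [Finset.sum_eq_single (0 : Fin (k+1))]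
        · simp only [Fin.val_zero, pow_zero, one_mul, Fin.succAbove_zero]
          have : M' 0 0 = u cc := by simp [hM', hg']
          rw [this, hsub]
        · intro j _ hj
          obtain ⟨t, rfl⟩ := Fin.eq_succ_of_ne_zero hj
          have : M' 0 t.succ = 0 := by
            simp only [hM', Matrix.updateRow_self]
            simp [hg', hcg t]
          rw [this]
          ring
        · intro h; exact absurd (Finset.mem_univ _) h
      rw [hM] at hdetM
      rw [hdetM, hdetM', hB]
      exact mul_ne_zero hcc hBdet


lemma prod_X_eq {n : Type*} [DecidableEq n] (P : Finset n) :
    (∏ p ∈ P, (MvPolynomial.X p : MvPolynomial n K))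
      = MvPolynomial.monomial (∑ p ∈ P, Finsupp.single p 1) 1 := by
  induction P using Finset.induction_on with
  | empty => simp
  | insert _ _ h ih =>
      rw [Finset.prod_insert h, Finset.sum_insert h, ih, MvPolynomial.X,
        MvPolynomial.monomial_mul, one_mul]

lemma dP_apply {n : Type*} [DecidableEq n] (P : Finset n) (q : n) :
    (∑ p ∈ P, Finsupp.single p (1 : ℕ)) q = if q ∈ P then 1 else 0 := by
  rw [Finset.sum_apply']
  simp only [Finsupp.single_apply]
  rw [Finset.sum_ite_eq' P q (fun _ => 1)]

lemma dP_inj {n : Type*} [DecidableEq n] {P P' : Finset n}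
    (h : (∑ p ∈ P, Finsupp.single p (1 : ℕ)) = ∑ p ∈ P', Finsupp.single p 1) : P = P' := by
  ext q
  have := DFunLike.congr_fun h q
  rw [dP_apply, dP_apply] at this
  by_cases h1 : q ∈ P <;> by_cases h2 : q ∈ P' <;> simp [h1, h2] at this ⊢

lemma exists_generic {n : Type*} [DecidableEq n] [Fintype n] {κ : Type*} [Fintype κ]
    {γ : κ → Type*} [∀ t, Fintype (γ t)] [∀ t, DecidableEq (γ t)]
    (G : ∀ t, Finset (γ t)) (P : ∀ t, γ t → Finset n) (a : ∀ t, γ t → K)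
    (hG : ∀ t, (G t).Nonempty) (ha : ∀ t, ∀ g ∈ G t, a t g ≠ 0)
    (hP : ∀ t, ∀ g ∈ G t, ∀ g' ∈ G t, P t g = P t g' → g = g') :
    ∃ c : n → K, ∀ t, (∑ g ∈ G t, a t g * ∏ p ∈ P t g, c p) ≠ 0 := by
  classical
  set Q : κ → MvPolynomial n K :=
    fun t => ∑ g ∈ G t, MvPolynomial.monomial (∑ p ∈ P t g, Finsupp.single p 1) (a t g) with hQdef
  have key : ∀ (x : n → K) (t : κ),
      MvPolynomial.eval x (Q t) = ∑ g ∈ G t, a t g * ∏ p ∈ P t g, x p := by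
    intro x t
    rw [hQdef]
    rw [map_sum]
    refine Finset.sum_congr rfl fun g _ => ?_
    rw [MvPolynomial.eval_monomial]
    congr 1
    rw [Finsupp.prod]
    have hsupp : (∑ p ∈ P t g, Finsupp.single p (1:ℕ)).support = P t g := by
      ext q
      rw [Finsupp.mem_support_iff, dP_apply]
      by_cases h : q ∈ P t g <;> simp [h]
    rw [hsupp]
    refine Finset.prod_congr rfl fun q hq => ?_
    rw [dP_apply, if_pos hq, pow_one]
  have hQ0 : ∀ t, Q t ≠ 0 := by
    intro t
    obtain ⟨g₀, hg₀⟩ := hG t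
    intro hzero
    have hcoeff := congrArg (MvPolynomial.coeff (∑ p ∈ P t g₀, Finsupp.single p 1)) hzero
    rw [hQdef] at hcoeff
    simp only [MvPolynomial.coeff_sum, MvPolynomial.coeff_monomial, MvPolynomial.coeff_zero]
      at hcoeff
    rw [Finset.sum_eq_single g₀] at hcoeff
    · rw [if_pos rfl] at hcoeff
      exact ha t g₀ hg₀ hcoeff
    · intro g hg hne
      rw [if_neg]
      intro hEq
      exact hne (hP t g hg g₀ hg₀ (dP_inj hEq))
    · intro h; exact absurd hg₀ h
  have hprod : (∏ t, Q t) ≠ 0 := Finset.prod_ne_zero_iff.mpr fun t _ => hQ0 t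
  have : ¬ ∀ x : n → K, MvPolynomial.eval x (∏ t, Q t) = 0 := by
    intro h
    exact hprod (MvPolynomial.funext fun x => by rw [h x]; simp)
  push_neg at this
  obtain ⟨c, hc⟩ := this
  refine ⟨c, fun t => ?_⟩
  rw [← key c t]
  intro h0
  rw [map_prod] at hc
  exact hc (Finset.prod_eq_zero (Finset.mem_univ t) h0)



def phi {r : ℕ} (w : Fin r → ℝ) (i j : Fin r) : ℝ := max (w i - w j) 0

lemma phi_nonneg {r : ℕ} (w : Fin r → ℝ) (i j : Fin r) : 0 ≤ phi w i j := le_max_right _ _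

def Tmat {r : ℕ} (w : Fin r → ℝ) (c : Fin r × Fin r → K) :
    Matrix (Fin r) (Fin r) (HahnSeries ℝ K) :=
  Matrix.of fun i j => HahnSeries.single (phi w i j) (c (i, j))

def betaSum {r k : ℕ} (w : Fin r → ℝ) (H g : Fin k → Fin r) : ℝ := ∑ s, phi w (g s) (H s)

lemma betaSum_nonneg {r k : ℕ} (w : Fin r → ℝ) (H g : Fin k → Fin r) : 0 ≤ betaSum w H g :=
  Finset.sum_nonneg fun s _ => phi_nonneg w _ _

open scoped Classical in
def VS {r k : ℕ} (S : Matrix (Fin r) (Fin r) (HahnSeries ℝ K)) (I : Fin k → Fin r) :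
    Finset (Fin k → Fin r) :=
  Finset.univ.filter fun g => minorDet S I g ≠ 0

lemma mem_VS_iff {r k : ℕ} {S : Matrix (Fin r) (Fin r) (HahnSeries ℝ K)}
    {I g : Fin k → Fin r} : g ∈ VS S I ↔ minorDet S I g ≠ 0 := by
  classical
  simp [VS]

open scoped Classical in
def mval {r k : ℕ} (w : Fin r → ℝ) (S : Matrix (Fin r) (Fin r) (HahnSeries ℝ K))
    (I H : Fin k → Fin r) : ℝ :=
  if h : (VS S I).Nonempty then
    (VS S I).inf' h (fun g => (minorDet S I g).order + betaSum w H g) else 0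

open scoped Classical in
def MinV {r k : ℕ} (w : Fin r → ℝ) (S : Matrix (Fin r) (Fin r) (HahnSeries ℝ K))
    (I H : Fin k → Fin r) : Finset (Fin k → Fin r) :=
  (VS S I).filter fun g => (minorDet S I g).order + betaSum w H g = mval w S I H

lemma mem_MinV_iff {r k : ℕ} {w : Fin r → ℝ} {S : Matrix (Fin r) (Fin r) (HahnSeries ℝ K)}
    {I H g : Fin k → Fin r} :
    g ∈ MinV w S I H ↔ g ∈ VS S I ∧ (minorDet S I g).order + betaSum w H g = mval w S I H := by
  classical
  simp [MinV]

lemma mval_eq_inf' {r k : ℕ} {w : Fin r → ℝ} {S : Matrix (Fin r) (Fin r) (HahnSeries ℝ K)}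
    {I H : Fin k → Fin r} (h : (VS S I).Nonempty) :
    mval w S I H = (VS S I).inf' h (fun g => (minorDet S I g).order + betaSum w H g) := by
  classical
  rw [mval, dif_pos h]

lemma mval_le {r k : ℕ} {w : Fin r → ℝ} {S : Matrix (Fin r) (Fin r) (HahnSeries ℝ K)}
    {I H g : Fin k → Fin r} (hg : g ∈ VS S I) :
    mval w S I H ≤ (minorDet S I g).order + betaSum w H g := by
  classical
  rw [mval_eq_inf' ⟨g, hg⟩]
  exact Finset.inf'_le _ hg

lemma exists_mval {r k : ℕ} (w : Fin r → ℝ) (S : Matrix (Fin r) (Fin r) (HahnSeries ℝ K))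
    (I H : Fin k → Fin r) (h : (VS S I).Nonempty) :
    ∃ g ∈ VS S I, mval w S I H = (minorDet S I g).order + betaSum w H g := by
  classical
  obtain ⟨g, hg, hEq⟩ := Finset.exists_mem_eq_inf' h
    (fun g => (minorDet S I g).order + betaSum w H g)
  exact ⟨g, hg, by rw [mval_eq_inf' h, hEq]⟩

lemma MinV_nonempty {r k : ℕ} (w : Fin r → ℝ) (S : Matrix (Fin r) (Fin r) (HahnSeries ℝ K))
    (I H : Fin k → Fin r) (h : (VS S I).Nonempty) : (MinV w S I H).Nonempty := by
  obtain ⟨g, hg, hEq⟩ := exists_mval w S I H h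
  exact ⟨g, mem_MinV_iff.mpr ⟨hg, hEq.symm⟩⟩

lemma leadingCoeff_eq_coeff_order {x : HahnSeries ℝ K} (hx : x ≠ 0) :
    x.leadingCoeff = x.coeff x.order := by
  exact HahnSeries.leadingCoeff_eq

lemma VS_nonempty {r k : ℕ} {S : Matrix (Fin r) (Fin r) (HahnSeries ℝ K)}
    (hS : S.det ≠ 0) {I : Fin k → Fin r} (hI : Function.Injective I) :
    (VS S I).Nonempty := by
  have hrows : LinearIndependent (HahnSeries ℝ K) (fun i => S i) := by
    refine (Matrix.linearIndependent_rows_iff_isUnit (A := S)).mpr ?_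
    exact (Matrix.isUnit_iff_isUnit_det S).mpr (isUnit_iff_ne_zero.mpr hS)
  have h2 : LinearIndependent (HahnSeries ℝ K) (fun s => S (I s)) := hrows.comp I hI
  obtain ⟨g, hg⟩ := exists_nonzero_minor k r _ h2
  exact ⟨g, mem_VS_iff.mpr hg⟩

lemma master {r k : ℕ} (w : Fin r → ℝ) (c : Fin r × Fin r → K)
    (S : Matrix (Fin r) (Fin r) (HahnSeries ℝ K)) (I H : Fin k → Fin r)
    (hne : (VS S I).Nonempty)
    (hc : (∑ g ∈ MinV w S I H, (minorDet S I g).leadingCoeff * ∏ s, c (g s, H s)) ≠ 0) :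
    minorDet (S * Tmat w c) I H ≠ 0 ∧
      (minorDet (S * Tmat w c) I H).order = mval w S I H := by
  classical
  set T := Tmat w c with hT
  have hexp : minorDet (S * T) I H = ∑ g : Fin k → Fin r,
      HahnSeries.single (betaSum w H g) (∏ s, c (g s, H s)) * minorDet S I g := by
    have h1 : (S * T).submatrix I H = (S.submatrix I id) * (T.submatrix id H) :=
      Matrix.submatrix_mul S T I id H Function.bijective_id
    rw [minorDet, h1, det_mul_expand]
    refine Finset.sum_congr rfl fun g _ => ?_
    congr 1
    · have h2 : ∀ s, (T.submatrix id H) (g s) s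
          = HahnSeries.single (phi w (g s) (H s)) (c (g s, H s)) := fun s => rfl
      rw [Finset.prod_congr rfl (fun s _ => h2 s), prod_single]
      rfl
  set m := mval w S I H with hm
  have hcoeff : ∀ x : ℝ, (minorDet (S*T) I H).coeff x = ∑ g : Fin k → Fin r,
      (∏ s, c (g s, H s)) * (minorDet S I g).coeff (x - betaSum w H g) := by
    intro x
    rw [hexp, coeff_sum]
    refine Finset.sum_congr rfl fun g _ => ?_
    have h3 := HahnSeries.coeff_single_mul_add (r := ∏ s, c (g s, H s))
      (x := minorDet S I g) (a := x - betaSum w H g) (b := betaSum w H g)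
    rw [sub_add_cancel] at h3
    exact h3
  have hlow : ∀ x : ℝ, x < m → (minorDet (S*T) I H).coeff x = 0 := by
    intro x hx
    rw [hcoeff]
    refine Finset.sum_eq_zero fun g _ => ?_
    by_cases hg : minorDet S I g = 0
    · simp [hg]
    · have h1 : m ≤ (minorDet S I g).order + betaSum w H g := mval_le (mem_VS_iff.mpr hg)
      have h2 : x - betaSum w H g < (minorDet S I g).order := by linarith
      rw [HahnSeries.coeff_eq_zero_of_lt_order h2, mul_zero]
  have hmc : (minorDet (S*T) I H).coeff m
      = ∑ g ∈ MinV w S I H, (minorDet S I g).leadingCoeff * ∏ s, c (g s, H s) := by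
    rw [hcoeff]
    rw [← Finset.sum_subset (Finset.subset_univ (MinV w S I H))]
    · refine Finset.sum_congr rfl fun g hg => ?_
      obtain ⟨hgV, hgeq⟩ := mem_MinV_iff.mp hg
      have hord : m - betaSum w H g = (minorDet S I g).order := by
        rw [hm, ← hgeq]; ring
      rw [hord, mul_comm]
      rw [leadingCoeff_eq_coeff_order (mem_VS_iff.mp hgV)]
    · intro g _ hgnot
      by_cases hg : minorDet S I g = 0
      · simp [hg]
      · have hgV : g ∈ VS S I := mem_VS_iff.mpr hg
        have h1 : m ≤ (minorDet S I g).order + betaSum w H g := mval_le hgV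
        have h2 : m ≠ (minorDet S I g).order + betaSum w H g := fun hEq =>
          hgnot (mem_MinV_iff.mpr ⟨hgV, hEq.symm⟩)
        have h3 : m - betaSum w H g < (minorDet S I g).order := by
          have := lt_of_le_of_ne h1 h2
          linarith
        rw [HahnSeries.coeff_eq_zero_of_lt_order h3, mul_zero]
  have hfin := order_eq_of_coeff (x := minorDet (S*T) I H) (m := m)
    (by rw [hmc]; exact hc) hlow
  exact hfin

lemma phi_mono {r : ℕ} {w : Fin r → ℝ} (hw : Monotone w) {i : Fin r} {h j : Fin r}
    (hhj : h ≤ j) : phi w i j ≤ phi w i h :=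
  max_le_max (sub_le_sub_left (hw hhj) _) le_rfl

lemma phi_le_shift {r : ℕ} {w : Fin r → ℝ} (hw : Monotone w) {i : Fin r} {h j : Fin r}
    (hhj : h ≤ j) : phi w i h ≤ phi w i j + (w j - w h) := by
  have h1 : w h ≤ w j := hw hhj
  refine max_le ?_ ?_
  · have : w i - w j ≤ phi w i j := le_max_left _ _
    linarith
  · have : (0:ℝ) ≤ phi w i j := phi_nonneg w i j
    linarith

lemma mval_comparison {r k : ℕ} {w : Fin r → ℝ} (hw : Monotone w)
    {S : Matrix (Fin r) (Fin r) (HahnSeries ℝ K)} {I H J : Fin k → Fin r}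
    (hHJ : ∀ s, H s ≤ J s) (hne : (VS S I).Nonempty) :
    mval w S I J ≤ mval w S I H ∧
      mval w S I H ≤ mval w S I J + ∑ s, w (J s) - ∑ s, w (H s) := by
  constructor
  · obtain ⟨g, hgV, hEq⟩ := exists_mval w S I H hne
    have h2 : mval w S I J ≤ (minorDet S I g).order + betaSum w J g := mval_le hgV
    have h3 : betaSum w J g ≤ betaSum w H g :=
      Finset.sum_le_sum fun s _ => phi_mono hw (hHJ s)
    linarith
  · obtain ⟨g, hgV, hEq⟩ := exists_mval w S I J hne
    have h2 : mval w S I H ≤ (minorDet S I g).order + betaSum w H g := mval_le hgV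
    have h3 : betaSum w H g ≤ betaSum w J g + (∑ s, w (J s) - ∑ s, w (H s)) := by
      have h4 : ∀ s : Fin k, phi w (g s) (H s) ≤ phi w (g s) (J s) + (w (J s) - w (H s)) :=
        fun s => phi_le_shift hw (hHJ s)
      have h5 := Finset.sum_le_sum (fun s (_ : s ∈ Finset.univ) => h4 s)
      rw [Finset.sum_add_distrib] at h5
      rw [betaSum, betaSum]
      have h6 : ∑ s : Fin k, (w (J s) - w (H s)) = ∑ s, w (J s) - ∑ s, w (H s) :=
        Finset.sum_sub_distrib _ _
      linarith
    linarith



lemma minor_one_order {r k : ℕ} (I g : Fin k → Fin r) :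
    (minorDet (1 : Matrix (Fin r) (Fin r) (HahnSeries ℝ K)) I g).order = 0 := by
  have h1 : (1 : Matrix (Fin r) (Fin r) (HahnSeries ℝ K)).submatrix I g
      = (HahnSeries.C (R := K)).mapMatrix ((1 : Matrix (Fin r) (Fin r) K).submatrix I g) := by
    ext i j
    simp only [Matrix.submatrix_apply, Matrix.one_apply, RingHom.mapMatrix_apply,
      Matrix.map_apply]
    split <;> simp
  rw [minorDet, h1, ← RingHom.map_det]
  exact HahnSeries.order_C

lemma VS_one_mem {r : ℕ} :
    (id : Fin r → Fin r) ∈ VS (1 : Matrix (Fin r) (Fin r) (HahnSeries ℝ K)) id := by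
  rw [mem_VS_iff, minorDet]
  rw [Matrix.submatrix_id_id]
  simp

lemma mval_one {r : ℕ} (w : Fin r → ℝ) :
    mval w (1 : Matrix (Fin r) (Fin r) (HahnSeries ℝ K)) id id = 0 := by
  have hne : (VS (1 : Matrix (Fin r) (Fin r) (HahnSeries ℝ K)) (id : Fin r → Fin r)).Nonempty :=
    ⟨id, VS_one_mem⟩
  refine le_antisymm ?_ ?_
  · have h0 := mval_le (w := w) (H := (id : Fin r → Fin r)) (VS_one_mem (K := K))
    have h1 : minorDet (1 : Matrix (Fin r) (Fin r) (HahnSeries ℝ K)) (id : Fin r → Fin r) id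
        = 1 := by
      rw [minorDet, Matrix.submatrix_id_id, Matrix.det_one]
    have h2 : betaSum w (id : Fin r → Fin r) id = 0 := by
      rw [betaSum]
      apply Finset.sum_eq_zero
      intro s _
      simp [phi]
    rw [h1, h2, HahnSeries.order_one] at h0
    linarith
  · obtain ⟨g, hg, hEq⟩ := exists_mval w 1 id id hne
    rw [hEq, minor_one_order]
    have := betaSum_nonneg w (id : Fin r → Fin r) g
    linarith

lemma Tmat_entries_inR {r : ℕ} (w : Fin r → ℝ) (c : Fin r × Fin r → K) :
    ∀ i j, inR ((Tmat w c) i j) := by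
  intro i j
  by_cases h : c (i, j) = 0
  · left
    show HahnSeries.single (phi w i j) (c (i,j)) = 0
    rw [h, HahnSeries.single_eq_zero]
  · right
    show (0:ℝ) ≤ (HahnSeries.single (phi w i j) (c (i,j))).order
    rw [HahnSeries.order_single h]
    exact phi_nonneg w i j

lemma detT_facts {r : ℕ} (w : Fin r → ℝ) (c : Fin r × Fin r → K)
    (hcdet : (∑ g ∈ MinV w (1 : Matrix (Fin r) (Fin r) (HahnSeries ℝ K)) id id,
      (minorDet (1 : Matrix (Fin r) (Fin r) (HahnSeries ℝ K)) id g).leadingCoeff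
        * ∏ s, c (g s, id s)) ≠ 0) :
    (Tmat w c).det ≠ 0 ∧ ((Tmat w c).det).order = 0 := by
  have h := master w c 1 id id ⟨id, VS_one_mem⟩ hcdet
  have h1 : minorDet (1 * Tmat w c) id id = (Tmat w c).det := by
    rw [minorDet, Matrix.submatrix_id_id, one_mul]
  rw [h1, mval_one] at h
  exact h

lemma exists_c {r : ℕ} (w : Fin r → ℝ) (S : Matrix (Fin r) (Fin r) (HahnSeries ℝ K)) :
    ∃ c : Fin r × Fin r → K,
      ∀ (b : Bool) (k : ℕ) (hk : k < r + 1) (I H : Fin k → Fin r),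
        Function.Injective H →
        (VS (if b then S else (1 : Matrix (Fin r) (Fin r) (HahnSeries ℝ K))) I).Nonempty →
        (∑ g ∈ MinV w (if b then S else 1) I H,
          (minorDet (if b then S else 1) I g).leadingCoeff * ∏ s, c (g s, H s)) ≠ 0 := by
  classical
  let κ := {t : Bool × Σ k : Fin (r+1), (Fin (k : ℕ) → Fin r) × (Fin (k : ℕ) → Fin r) //
    Function.Injective t.2.2.2 ∧
      (VS (if t.1 then S else (1 : Matrix (Fin r) (Fin r) (HahnSeries ℝ K))) t.2.2.1).Nonempty}
  obtain ⟨c, hc⟩ := exists_generic (K := K) (n := Fin r × Fin r) (κ := κ)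
    (γ := fun t => Fin ((t.1.2.1 : ℕ)) → Fin r)
    (G := fun t => MinV w (if t.1.1 then S else 1) t.1.2.2.1 t.1.2.2.2)
    (P := fun t g => Finset.image (fun s => (g s, t.1.2.2.2 s)) Finset.univ)
    (a := fun t g => (minorDet (if t.1.1 then S else 1) t.1.2.2.1 g).leadingCoeff)
    (fun t => MinV_nonempty _ _ _ _ t.2.2)
    (fun t g hg => HahnSeries.leadingCoeff_ne_zero.mpr
      (mem_VS_iff.mp (mem_MinV_iff.mp hg).1))
    (fun t g hg g' hg' hPP => by
      funext s
      have hPP' : Finset.image (fun s => (g s, t.1.2.2.2 s)) Finset.univ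
          = Finset.image (fun s => (g' s, t.1.2.2.2 s)) Finset.univ := hPP
      have hmem : (g s, t.1.2.2.2 s) ∈ Finset.image
          (fun s => (g' s, t.1.2.2.2 s)) Finset.univ := by
        rw [← hPP']
        exact Finset.mem_image_of_mem _ (Finset.mem_univ s)
      obtain ⟨s', _, hs'⟩ := Finset.mem_image.mp hmem
      have h2 : t.1.2.2.2 s' = t.1.2.2.2 s := congrArg Prod.snd hs'
      have h1 : g' s' = g s := congrArg Prod.fst hs'
      rw [t.2.1 h2] at h1
      exact h1.symm)
  refine ⟨c, ?_⟩
  intro b k hk I H hHinj hne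
  have h := hc ⟨(b, ⟨⟨k, hk⟩, I, H⟩), hHinj, hne⟩
  have hEqsum : (∑ g ∈ MinV w (if b then S else 1) I H,
      (minorDet (if b then S else 1) I g).leadingCoeff * ∏ s, c (g s, H s))
      = ∑ g ∈ MinV w (if b then S else 1) I H,
        (minorDet (if b then S else 1) I g).leadingCoeff
          * ∏ p ∈ Finset.image (fun s => (g s, H s)) Finset.univ, c p := by
    refine Finset.sum_congr rfl fun g _ => ?_
    congr 1
    rw [Finset.prod_image]
    intro s _ s' _ hEq
    exact hHinj (congrArg Prod.snd hEq)
  rw [hEqsum]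
  exact h

end GCF
/-- Existence of a generic `ν̂`-admissible right factor `T`: for all
index sets `I ⊆ H ⊆ J` of equal length `k`, `1 ≤ k ≤ r`, the minors `(ST)_{IJ}, (ST)_{IH}`
are nonzero and `‖(ST)_{IJ}‖ ≤ ‖(ST)_{IH}‖ ≤ ‖(ST)_{IJ}‖ + |ν̂_J| − |ν̂_H|`. -/
theorem generic_column_factor {r : ℕ} (ν : Fin r → ℝ) (hν : Antitone ν)
    (S : Matrix (Fin r) (Fin r) (HahnSeries ℝ K)) (hS : S.det ≠ 0) :
    ∃ T : Matrix (Fin r) (Fin r) (HahnSeries ℝ K), NuHatAdmissible ν T ∧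
      ∀ (k : ℕ), 1 ≤ k → k ≤ r → ∀ (I H J : Fin k → Fin r),
        StrictMono I → StrictMono H → StrictMono J →
        (∀ s, I s ≤ H s) → (∀ s, H s ≤ J s) →
        minorDet (S * T) I J ≠ 0 ∧ minorDet (S * T) I H ≠ 0 ∧
        (minorDet (S * T) I J).order ≤ (minorDet (S * T) I H).order ∧
        (minorDet (S * T) I H).order ≤
          (minorDet (S * T) I J).order + (∑ s, ν ((J s).rev)) - ∑ s, ν ((H s).rev) := by
  classical
  set w : Fin r → ℝ := fun i => ν i.rev with hw
  have hwmono : Monotone w := fun i j hij => hν (Fin.rev_le_rev.mpr hij)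
  obtain ⟨c, hc⟩ := GCF.exists_c w S
  refine ⟨GCF.Tmat w c, ?_, ?_⟩
  · show InGLR (GCF.Tmat w c) ∧ InGLR ((DmatHat K ν)⁻¹ * GCF.Tmat w c * DmatHat K ν)
    have hkr : r < r + 1 := Nat.lt_succ_self r
    have hcdet := hc false r hkr id id Function.injective_id ⟨id, GCF.VS_one_mem⟩
    have hdetT := GCF.detT_facts w c hcdet
    have hTGL : InGLR (GCF.Tmat w c) :=
      GCF.inGLR_of (GCF.Tmat_entries_inR w c) hdetT.1 hdetT.2
    set E := Matrix.diagonal (fun i => HahnSeries.single (-(w i)) (1 : K)) with hE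
    have hED : E * DmatHat K ν = 1 := by
      rw [DmatHat, Dmat, hE, Matrix.diagonal_mul_diagonal]
      have h2 : (fun i => HahnSeries.single (-(w i)) (1:K) * HahnSeries.single (ν i.rev) 1)
          = fun _ => (1 : HahnSeries ℝ K) := by
        funext i
        rw [HahnSeries.single_mul_single, one_mul]
        have h3 : -(w i) + ν i.rev = 0 := by
          have : ν i.rev = w i := rfl
          rw [this]; ring
        rw [h3, HahnSeries.single_zero_one]
      rw [h2, Matrix.diagonal_one]
    have hDinv : (DmatHat K ν)⁻¹ = E := Matrix.inv_eq_left_inv hED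
    have hAentry : ∀ i j, (E * GCF.Tmat w c * DmatHat K ν) i j
        = HahnSeries.single (max (w j - w i) 0) (c (i, j)) := by
      intro i j
      rw [DmatHat, Dmat, Matrix.mul_diagonal, hE, Matrix.diagonal_mul]
      show HahnSeries.single (-(w i)) (1:K) * HahnSeries.single (GCF.phi w i j) (c (i,j))
          * HahnSeries.single (ν j.rev) 1 = _
      rw [HahnSeries.single_mul_single, HahnSeries.single_mul_single, one_mul, mul_one]
      have hνj : ν j.rev = w j := rfl
      have hexp : -(w i) + GCF.phi w i j + ν j.rev = max (w j - w i) 0 := by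
        rw [hνj, GCF.phi]
        rcases le_total (w i) (w j) with h | h
        · rw [max_eq_right (by linarith : w i - w j ≤ 0),
            max_eq_left (by linarith : (0:ℝ) ≤ w j - w i)]
          ring
        · rw [max_eq_left (by linarith : (0:ℝ) ≤ w i - w j),
            max_eq_right (by linarith : w j - w i ≤ 0)]
          ring
      rw [hexp]
    have hAin : ∀ i j, inR ((E * GCF.Tmat w c * DmatHat K ν) i j) := by
      intro i j
      rw [hAentry]
      by_cases h : c (i,j) = 0
      · left; rw [h, HahnSeries.single_eq_zero]
      · right; rw [HahnSeries.order_single h]; exact le_max_right _ _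
    have hne1 : HahnSeries.single (∑ i, -(w i)) (1:K) ≠ 0 := by
      rw [Ne, HahnSeries.single_eq_zero_iff]; exact one_ne_zero
    have hne2 : HahnSeries.single (∑ i, w i) (1:K) ≠ 0 := by
      rw [Ne, HahnSeries.single_eq_zero_iff]; exact one_ne_zero
    have hdetE : E.det = HahnSeries.single (∑ i, -(w i)) (1:K) := by
      rw [hE, Matrix.det_diagonal, GCF.prod_single]
      congr 1
      exact Finset.prod_const_one
    have hdetD : (DmatHat K ν).det = HahnSeries.single (∑ i, w i) (1:K) := by
      rw [DmatHat, Dmat, Matrix.det_diagonal, GCF.prod_single]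
      congr 1
      exact Finset.prod_const_one
    have hdetmul : (E * GCF.Tmat w c * DmatHat K ν).det
        = HahnSeries.single (∑ i, -(w i)) (1:K) * (GCF.Tmat w c).det
          * HahnSeries.single (∑ i, w i) (1:K) := by
      rw [Matrix.det_mul, Matrix.det_mul, hdetE, hdetD]
    have hdetA1 : (E * GCF.Tmat w c * DmatHat K ν).det ≠ 0 := by
      rw [hdetmul]
      exact mul_ne_zero (mul_ne_zero hne1 hdetT.1) hne2
    have hdetA2 : (E * GCF.Tmat w c * DmatHat K ν).det.order = 0 := by
      rw [hdetmul, HahnSeries.order_mul (mul_ne_zero hne1 hdetT.1) hne2,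
        HahnSeries.order_mul hne1 hdetT.1, HahnSeries.order_single one_ne_zero,
        HahnSeries.order_single one_ne_zero, hdetT.2, Finset.sum_neg_distrib]
      ring
    refine ⟨hTGL, ?_⟩
    rw [hDinv]
    exact GCF.inGLR_of hAin hdetA1 hdetA2
  · intro k hk1 hkr I H J hImono hHmono hJmono hIH hHJ
    have hk : k < r + 1 := by omega
    have hne : (GCF.VS S I).Nonempty := GCF.VS_nonempty hS hImono.injective
    have hcIH := hc true k hk I H hHmono.injective hne
    have hcIJ := hc true k hk I J hJmono.injective hne
    have hmH := GCF.master w c S I H hne hcIH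
    have hmJ := GCF.master w c S I J hne hcIJ
    have hcomp := GCF.mval_comparison (K := K) hwmono (S := S) (I := I) (H := H) (J := J)
      hHJ hne
    refine ⟨hmJ.1, hmH.1, ?_, ?_⟩
    · rw [hmJ.2, hmH.2]; exact hcomp.1
    · rw [hmJ.2, hmH.2]; exact hcomp.2

end
end
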